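/- arXiv:2103.14183 — 2 statements merged into one kernel-verified Lean document; each statement's English description precedes it below -/
import Mathlib

section
/- The twisted convolution of a rapidly decaying function with a Schwartz function is a Schwartz function: if F is Schwartz on R^{2n}, G is measurable with sup_α |α^a G(α)| < ∞ for every multi-index a, and Ω' is any real 2n×2n matrix, then the function (F ⊛ G)(α) = ∫ exp(i α·Ω'·β/2) F(α − β) G(β) dβ is a Schwartz function on R^{2n}. -/
open MeasureTheory Real Complex

noncomputable section

/-- Configuration space ℝⁿ. -/
abbrev Vn (n : ℕ) := Fin n → ℝ
/-- Phase space ℝ²ⁿ, as pairs (x, p). -/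
abbrev PS (n : ℕ) := Vn n × Vn n

/-- Symplectic form α ∧ β = α_x·β_p − α_p·β_x. -/
def symp {n : ℕ} (a b : PS n) : ℝ := ∑ j, (a.1 j * b.2 j - a.2 j * b.1 j)

/-- Weyl displacement operator (D_ξ φ)(y) = exp(i(y − ξ_x/2)·ξ_p) φ(y − ξ_x). -/
def disp {n : ℕ} (ξ : PS n) (φ : Vn n → ℂ) : Vn n → ℂ :=
  fun y => Complex.exp (Complex.I * ((∑ j, (y j - ξ.1 j / 2) * ξ.2 j : ℝ) : ℂ)) * φ (y - ξ.1)

/-- L² inner product ⟨f, g⟩ = ∫ conj(f) g (conjugate-linear in the first argument). -/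
def ip {n : ℕ} (f g : Vn n → ℂ) : ℂ := ∫ x, (starRingEnd ℂ) (f x) * g x

/-- Wigner transform of the rank-one operator |f⟩⟨g|. -/
def wig2 {n : ℕ} (f g : Vn n → ℂ) (α : PS n) : ℂ :=
  (((2 * Real.pi) ^ n)⁻¹ : ℝ) *
    ∫ y : Vn n, Complex.exp (Complex.I * ((∑ j, α.2 j * y j : ℝ) : ℂ))
      * f (α.1 - (2:ℝ)⁻¹ • y) * (starRingEnd ℂ) (g (α.1 + (2:ℝ)⁻¹ • y))

/-- Wigner function of a (pure-state) wavefunction f. -/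
def wig {n : ℕ} (f : Vn n → ℂ) : PS n → ℂ := wig2 f f

/-- Wigner transform of a kernel K on ℝⁿ × ℝⁿ. -/
def wigK {n : ℕ} (K : PS n → ℂ) (α : PS n) : ℂ :=
  (((2 * Real.pi) ^ n)⁻¹ : ℝ) *
    ∫ y : Vn n, Complex.exp (Complex.I * ((∑ j, α.2 j * y j : ℝ) : ℂ))
      * K (α.1 - (2:ℝ)⁻¹ • y, α.1 + (2:ℝ)⁻¹ • y)

/-- Monomial x^a for a multi-index a. -/
def mono {n : ℕ} (a : Fin n → ℕ) (x : Vn n) : ℝ := ∏ j, x j ^ a j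

/-- Monomial on phase space for a pair multi-index. -/
def monoP {n : ℕ} (a : (Fin n → ℕ) × (Fin n → ℕ)) (α : PS n) : ℝ := mono a.1 α.1 * mono a.2 α.2

/-- |a| for multi-index. -/
def deg {n : ℕ} (a : Fin n → ℕ) : ℕ := ∑ j, a j

def degP {n : ℕ} (a : (Fin n → ℕ) × (Fin n → ℕ)) : ℕ := deg a.1 + deg a.2

/-- Partial derivative in coordinate j. -/
def pd {n : ℕ} (j : Fin n) (f : Vn n → ℂ) : Vn n → ℂ := fun x => fderiv ℝ f x (Pi.single j 1)

/-- Multi-index partial derivative ∂^b on ℝⁿ. -/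
def mderiv {n : ℕ} (b : Fin n → ℕ) (f : Vn n → ℂ) : Vn n → ℂ :=
  (List.finRange n).foldl (fun g j => (pd j)^[b j] g) f

/-- Directional derivative on phase space. -/
def pdP {n : ℕ} (v : PS n) (f : PS n → ℂ) : PS n → ℂ := fun x => fderiv ℝ f x v

/-- Multi-index partial derivative ∂^b on phase space (pair multi-index). -/
def mderivP {n : ℕ} (b : (Fin n → ℕ) × (Fin n → ℕ)) (f : PS n → ℂ) : PS n → ℂ :=
  (List.finRange n).foldl (fun g j => (pdP ((0 : Vn n), Pi.single j 1))^[b.2 j] g)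
    ((List.finRange n).foldl (fun g j => (pdP (Pi.single j 1, (0 : Vn n)))^[b.1 j] g) f)

/-- A function is Schwartz class iff it agrees with some `SchwartzMap`. -/
def IsSchwartz {E : Type*} [NormedAddCommGroup E] [NormedSpace ℝ E] (f : E → ℂ) : Prop :=
  ∃ g : SchwartzMap E ℂ, ∀ x, g x = f x

end

namespace TC

noncomputable section

open MeasureTheory Real Complex Finset
open scoped ContDiff

variable {m : ℕ}

/-- Rapid decay. -/
def RD (G : (Fin m → ℝ) → ℂ) : Prop :=
  Measurable G ∧ ∀ a : Fin m → ℕ, ∃ C, ∀ β, |mono a β| * ‖G β‖ ≤ C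

lemma RD.bounded {G : (Fin m → ℝ) → ℂ} (h : RD G) : ∃ C, ∀ β, ‖G β‖ ≤ C := by
  obtain ⟨C, hC⟩ := h.2 0
  exact ⟨C, fun β => by simpa [mono] using hC β⟩

lemma mono_add_single (a : Fin m → ℕ) (j : Fin m) (β : Fin m → ℝ) :
    mono (a + Pi.single j 1 : Fin m → ℕ) β = mono a β * β j := by
  unfold mono
  have h1 : ∀ k, β k ^ (a + Pi.single j 1 : Fin m → ℕ) k
      = β k ^ a k * β k ^ (Pi.single j 1 : Fin m → ℕ) k := by
    intro k; rw [Pi.add_apply, pow_add]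
  rw [Finset.prod_congr rfl fun k _ => h1 k, Finset.prod_mul_distrib]
  congr 1
  rw [Finset.prod_eq_single j (fun k _ hk => by simp [Pi.single_eq_of_ne hk]) (by simp)]
  simp

lemma RD.congr {G₁ G₂ : (Fin m → ℝ) → ℂ} (h : RD G₁) (e : ∀ β, G₁ β = G₂ β) : RD G₂ := by
  have : G₁ = G₂ := funext e
  rwa [← this]

lemma RD.coordMul {G : (Fin m → ℝ) → ℂ} (h : RD G) (j : Fin m) :
    RD fun β => (β j : ℂ) * G β := by
  refine ⟨(Complex.measurable_ofReal.comp (measurable_pi_apply j)).mul h.1, fun a => ?_⟩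
  obtain ⟨C, hC⟩ := h.2 (a + Pi.single j 1 : Fin m → ℕ)
  refine ⟨C, fun β => ?_⟩
  have h2 := hC β
  rw [mono_add_single] at h2
  calc |mono a β| * ‖(β j : ℂ) * G β‖ = |mono a β * β j| * ‖G β‖ := by
        rw [norm_mul, Complex.norm_real, Real.norm_eq_abs, abs_mul]; ring
    _ ≤ C := h2

lemma RD.zero : RD (fun _ : Fin m → ℝ => (0 : ℂ)) :=
  ⟨measurable_const, fun a => ⟨0, fun β => by simp⟩⟩

lemma RD.add {G₁ G₂ : (Fin m → ℝ) → ℂ} (h₁ : RD G₁) (h₂ : RD G₂) :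
    RD fun β => G₁ β + G₂ β := by
  refine ⟨h₁.1.add h₂.1, fun a => ?_⟩
  obtain ⟨C₁, hC₁⟩ := h₁.2 a
  obtain ⟨C₂, hC₂⟩ := h₂.2 a
  refine ⟨C₁ + C₂, fun β => ?_⟩
  calc |mono a β| * ‖G₁ β + G₂ β‖ ≤ |mono a β| * (‖G₁ β‖ + ‖G₂ β‖) := by
        gcongr; exact norm_add_le _ _
    _ = |mono a β| * ‖G₁ β‖ + |mono a β| * ‖G₂ β‖ := by ring
    _ ≤ C₁ + C₂ := add_le_add (hC₁ β) (hC₂ β)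

lemma RD.smul {G : (Fin m → ℝ) → ℂ} (c : ℂ) (h : RD G) : RD fun β => c * G β := by
  refine ⟨measurable_const.mul h.1, fun a => ?_⟩
  obtain ⟨C, hC⟩ := h.2 a
  refine ⟨‖c‖ * C, fun β => ?_⟩
  have h0 : (0:ℝ) ≤ |mono a β| * ‖G β‖ := by positivity
  calc |mono a β| * ‖c * G β‖ = ‖c‖ * (|mono a β| * ‖G β‖) := by rw [norm_mul]; ring
    _ ≤ ‖c‖ * C := by gcongr; exact hC β

lemma RD.sum {ι : Type*} {s : Finset ι} {f : ι → (Fin m → ℝ) → ℂ}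
    (h : ∀ i ∈ s, RD (f i)) : RD fun β => ∑ i ∈ s, f i β := by
  classical
  induction s using Finset.induction with
  | empty => exact RD.zero.congr (by simp)
  | @insert j s hjs ih =>
    have := ((h j (Finset.mem_insert_self _ _)).add
      (ih fun i hi => h i (Finset.mem_insert_of_mem hi)))
    exact this.congr fun β => by rw [Finset.sum_insert hjs]

lemma RD.prodMul {G : (Fin m → ℝ) → ℂ} (h : RD G) (s : Finset (Fin m)) :
    RD fun β => ((∏ j ∈ s, (1 + β j ^ 2) : ℝ) : ℂ) * G β := by
  classical
  induction s using Finset.induction with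
  | empty => exact h.congr fun β => by simp
  | @insert j s hjs ih =>
    have h2 := (ih.coordMul j).coordMul j
    have h3 := ih.add h2
    exact h3.congr fun β => by rw [Finset.prod_insert hjs]; push_cast; ring

lemma RD.prodPowMul {G : (Fin m → ℝ) → ℂ} (h : RD G) (p : ℕ) :
    RD fun β => (((∏ j, (1 + β j ^ 2)) ^ p : ℝ) : ℂ) * G β := by
  induction p with
  | zero => exact h.congr fun β => by simp
  | succ p ih =>
    have := ih.prodMul Finset.univ
    exact this.congr fun β => by push_cast; ring

/-- The integrable weight. -/
def w (β : Fin m → ℝ) : ℝ := ∏ j, (1 + β j ^ 2)⁻¹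

lemma w_pos (β : Fin m → ℝ) : 0 < w β := by
  apply Finset.prod_pos; intro j _; positivity

lemma w_eq (β : Fin m → ℝ) : w β = (∏ j, (1 + β j ^ 2))⁻¹ := by
  rw [w, ← Finset.prod_inv_distrib]

lemma one_le_prod_sq (β : Fin m → ℝ) : (1:ℝ) ≤ ∏ j, (1 + β j ^ 2) := by
  have := Finset.prod_le_prod (s := Finset.univ) (f := fun _ : Fin m => (1:ℝ))
    (g := fun j => 1 + β j ^ 2) (fun j _ => by norm_num) (fun j _ => by have := sq_nonneg (β j); linarith)
  simpa using this

lemma w_int : Integrable (w (m := m)) := by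
  have := Integrable.fintype_prod (𝕜 := ℝ)
    (f := fun (_ : Fin m) (x : ℝ) => (1 + x ^ 2)⁻¹) (fun _ => integrable_inv_one_add_sq)
  exact this

lemma RD.weight_bound {G : (Fin m → ℝ) → ℂ} (h : RD G) (p : ℕ) :
    ∃ C, 0 ≤ C ∧ ∀ β, (∏ j, (1 + β j ^ 2)) ^ p * ‖G β‖ ≤ C * w β := by
  obtain ⟨C, hC⟩ := (h.prodPowMul (p + 1)).bounded
  have hC0 : 0 ≤ C := le_trans (norm_nonneg _) (hC 0)
  refine ⟨C, hC0, fun β => ?_⟩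
  have hP : (0:ℝ) < ∏ j, (1 + β j ^ 2) := lt_of_lt_of_le one_pos (one_le_prod_sq β)
  have h2 : (∏ j, (1 + β j ^ 2)) ^ (p + 1) * ‖G β‖ ≤ C := by
    have h' := hC β
    simp only [norm_mul, Complex.norm_real, Real.norm_eq_abs] at h'
    rwa [_root_.abs_of_nonneg (show (0:ℝ) ≤ (∏ j, (1 + β j ^ 2)) ^ (p + 1) by positivity)] at h'
  rw [w_eq, ← div_eq_mul_inv, le_div_iff₀ hP]
  calc (∏ j, (1 + β j ^ 2)) ^ p * ‖G β‖ * (∏ j, (1 + β j ^ 2))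
      = (∏ j, (1 + β j ^ 2)) ^ (p + 1) * ‖G β‖ := by ring
    _ ≤ C := h2

lemma one_le_prod_sq' (β : Fin m → ℝ) (s : Finset (Fin m)) :
    (1:ℝ) ≤ ∏ j ∈ s, (1 + β j ^ 2) := by
  have := Finset.prod_le_prod (s := s) (f := fun _ : Fin m => (1:ℝ))
    (g := fun j => 1 + β j ^ 2) (fun j _ => by norm_num)
    (fun j _ => by have := sq_nonneg (β j); linarith)
  simpa using this

lemma RD.norm_pow_bound {G : (Fin m → ℝ) → ℂ} (h : RD G) (p : ℕ) :
    ∃ C, 0 ≤ C ∧ ∀ β, ‖β‖ ^ p * ‖G β‖ ≤ C * w β := by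
  obtain ⟨C, hC0, hC⟩ := h.weight_bound p
  refine ⟨C, hC0, fun β => ?_⟩
  have h1 : ‖β‖ ≤ ∏ j, (1 + β j ^ 2) := by
    rcases isEmpty_or_nonempty (Fin m) with hm | hm
    · have hβ : β = 0 := Subsingleton.elim _ _
      simp [hβ]
    · rw [pi_norm_le_iff_of_nonneg (le_trans zero_le_one (one_le_prod_sq β))]
      intro i
      have h2 : ‖β i‖ ≤ 1 + β i ^ 2 := by
        rw [Real.norm_eq_abs]
        nlinarith [_root_.sq_abs (β i), _root_.abs_nonneg (β i)]
      refine h2.trans ?_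
      have h3 := Finset.mul_prod_erase Finset.univ (fun j => 1 + β j ^ 2) (Finset.mem_univ i)
      have h4 := one_le_prod_sq' β (Finset.univ.erase i)
      have h5 : (0:ℝ) ≤ 1 + β i ^ 2 := by positivity
      calc (1 + β i ^ 2) = (1 + β i ^ 2) * 1 := by ring
        _ ≤ (1 + β i ^ 2) * ∏ j ∈ Finset.univ.erase i, (1 + β j ^ 2) := by gcongr
        _ = ∏ j, (1 + β j ^ 2) := h3
  calc ‖β‖ ^ p * ‖G β‖ ≤ (∏ j, (1 + β j ^ 2)) ^ p * ‖G β‖ := by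
        gcongr
    _ ≤ C * w β := hC β

lemma integrable_of_wbound {f : (Fin m → ℝ) → ℂ} (hm' : AEStronglyMeasurable f volume)
    (C : ℝ) (hb : ∀ β, ‖f β‖ ≤ C * w β) : Integrable f :=
  Integrable.mono' (w_int.const_mul C) hm' (Filter.Eventually.of_forall hb)

lemma RD.integrable {G : (Fin m → ℝ) → ℂ} (h : RD G) : Integrable G := by
  obtain ⟨C, _, hC⟩ := h.norm_pow_bound 0
  exact integrable_of_wbound h.1.aestronglyMeasurable C fun β => by simpa using hC β

lemma RD.integrable_norm_pow {G : (Fin m → ℝ) → ℂ} (h : RD G) (p : ℕ) :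
    Integrable (fun β => ‖β‖ ^ p * ‖G β‖) := by
  obtain ⟨C, _, hC⟩ := h.norm_pow_bound p
  refine Integrable.mono' (w_int.const_mul C)
    (((continuous_norm.pow p).aestronglyMeasurable).mul h.1.norm.aestronglyMeasurable)
    (Filter.Eventually.of_forall fun β => ?_)
  rw [Real.norm_eq_abs, _root_.abs_of_nonneg (by positivity)]
  exact hC β

section OmegaStuff

variable (Ω : Matrix (Fin m) (Fin m) ℝ)

/-- The twisting phase. -/
def eC (α β : Fin m → ℝ) : ℂ :=
  Complex.exp (Complex.I * ((dotProduct α (Ω.mulVec β) / 2 : ℝ) : ℂ))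

/-- The twisted convolution. -/
def T (F : SchwartzMap (Fin m → ℝ) ℂ) (G : (Fin m → ℝ) → ℂ) : (Fin m → ℝ) → ℂ :=
  fun α => ∫ β, eC Ω α β * F (α - β) * G β

lemma norm_eC (α β : Fin m → ℝ) : ‖eC Ω α β‖ = 1 := by
  rw [eC, Complex.norm_exp]
  norm_num

lemma continuous_dot (α : Fin m → ℝ) :
    Continuous fun β : Fin m → ℝ => dotProduct α (Ω.mulVec β) := by
  simp only [dotProduct, Matrix.mulVec]
  exact continuous_finset_sum _ fun j _ => continuous_const.mul
    (continuous_finset_sum _ fun k _ => continuous_const.mul (continuous_apply k))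

lemma continuous_eC (α : Fin m → ℝ) : Continuous fun β => eC Ω α β := by
  unfold eC
  exact Complex.continuous_exp.comp (continuous_const.mul
    (Complex.continuous_ofReal.comp ((continuous_dot Ω α).div_const 2)))

lemma F_bound (F : SchwartzMap (Fin m → ℝ) ℂ) : ∃ C, 0 < C ∧ ∀ x, ‖F x‖ ≤ C := by
  obtain ⟨C, hC0, hC⟩ := F.decay 0 0
  exact ⟨C, hC0, fun x => by simpa [norm_iteratedFDeriv_zero] using hC x⟩

lemma F_fderiv_bound (F : SchwartzMap (Fin m → ℝ) ℂ) :
    ∃ C, 0 < C ∧ ∀ x, ‖fderiv ℝ F x‖ ≤ C := by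
  obtain ⟨C, hC0, hC⟩ := F.decay 0 1
  refine ⟨C, hC0, fun x => ?_⟩
  have h1 := hC x
  rw [← norm_iteratedFDeriv_fderiv (n := 0), norm_iteratedFDeriv_zero] at h1
  simpa using h1

lemma T_intg_aesm (F : SchwartzMap (Fin m → ℝ) ℂ) {G : (Fin m → ℝ) → ℂ}
    (hGm : Measurable G) (α : Fin m → ℝ) :
    AEStronglyMeasurable (fun β => eC Ω α β * F (α - β) * G β) volume :=
  (((continuous_eC Ω α).mul (F.continuous.comp
    (continuous_const.sub continuous_id))).aestronglyMeasurable).mul hGm.aestronglyMeasurable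

lemma T_intg_integrable (F : SchwartzMap (Fin m → ℝ) ℂ) {G : (Fin m → ℝ) → ℂ}
    (hG : RD G) (α : Fin m → ℝ) :
    Integrable fun β => eC Ω α β * F (α - β) * G β := by
  obtain ⟨M, hM0, hM⟩ := F_bound F
  obtain ⟨C, hC0, hC⟩ := hG.norm_pow_bound 0
  refine integrable_of_wbound (T_intg_aesm Ω F hG.1 α) (M * C) fun β => ?_
  rw [norm_mul, norm_mul, norm_eC, one_mul]
  calc ‖F (α - β)‖ * ‖G β‖ ≤ M * (C * w β) := by
        refine mul_le_mul (hM _) (by simpa using hC β) (norm_nonneg _) hM0.le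
    _ = M * C * w β := by ring

/-- Coordinate functional into `ℂ`. -/
def cj (j : Fin m) : (Fin m → ℝ) →L[ℝ] ℂ :=
  Complex.ofRealCLM.comp (ContinuousLinearMap.proj j)

lemma cj_apply (j : Fin m) (v : Fin m → ℝ) : cj j v = (v j : ℂ) := rfl

/-- The linear functional `v ↦ v ⬝ Ωβ / 2` as a map into `ℂ`. -/
def Acl (β : Fin m → ℝ) : (Fin m → ℝ) →L[ℝ] ℂ :=
  ∑ j, (Ω.mulVec β j / 2) • cj j

lemma Acl_apply (β v : Fin m → ℝ) :
    Acl Ω β v = ((dotProduct v (Ω.mulVec β) / 2 : ℝ) : ℂ) := by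
  simp only [Acl, ContinuousLinearMap.coe_sum', Finset.sum_apply,
    ContinuousLinearMap.coe_smul', Pi.smul_apply, cj_apply, dotProduct,
    Finset.sum_div]
  push_cast
  refine Finset.sum_congr rfl fun j _ => ?_
  rw [Complex.real_smul]
  push_cast
  ring

lemma Acl_single (β : Fin m → ℝ) (j : Fin m) :
    Acl Ω β (Pi.single j 1) = ((Ω.mulVec β j / 2 : ℝ) : ℂ) := by
  rw [Acl_apply]
  norm_cast
  rw [single_dotProduct, one_mul]

/-- Constant controlling the bilinear form. -/
def cΩ : ℝ := (∑ j, ∑ k, |Ω j k|) / 2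

lemma cΩ_nonneg : 0 ≤ cΩ Ω := by
  unfold cΩ
  positivity

lemma Acl_norm (β : Fin m → ℝ) : ‖Acl Ω β‖ ≤ cΩ Ω * ‖β‖ := by
  refine ContinuousLinearMap.opNorm_le_bound _
    (mul_nonneg (cΩ_nonneg Ω) (norm_nonneg β)) fun v => ?_
  rw [Acl_apply, Complex.norm_real, Real.norm_eq_abs]
  have h1 : |dotProduct v (Ω.mulVec β)| ≤ (∑ j, ∑ k, |Ω j k|) * (‖β‖ * ‖v‖) := by
    calc |dotProduct v (Ω.mulVec β)| ≤ ∑ j, |v j * Ω.mulVec β j| :=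
          Finset.abs_sum_le_sum_abs _ _
      _ ≤ ∑ j, (∑ k, |Ω j k|) * (‖β‖ * ‖v‖) := by
          refine Finset.sum_le_sum fun j _ => ?_
          rw [abs_mul]
          have h2 : |Ω.mulVec β j| ≤ (∑ k, |Ω j k|) * ‖β‖ := by
            have hmv : Ω.mulVec β j = ∑ k, Ω j k * β k := by
              simp [Matrix.mulVec, dotProduct]
            rw [hmv]
            calc |∑ k, Ω j k * β k| ≤ ∑ k, |Ω j k * β k| := Finset.abs_sum_le_sum_abs _ _
              _ ≤ ∑ k, |Ω j k| * ‖β‖ := by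
                  refine Finset.sum_le_sum fun k _ => ?_
                  rw [abs_mul]
                  have hk : |β k| ≤ ‖β‖ := by
                    simpa [Real.norm_eq_abs] using norm_le_pi_norm β k
                  exact mul_le_mul_of_nonneg_left hk (abs_nonneg _)
              _ = (∑ k, |Ω j k|) * ‖β‖ := by rw [Finset.sum_mul]
          have h3 : |v j| ≤ ‖v‖ := by simpa [Real.norm_eq_abs] using norm_le_pi_norm v j
          calc |v j| * |Ω.mulVec β j| ≤ ‖v‖ * ((∑ k, |Ω j k|) * ‖β‖) := by
                refine mul_le_mul h3 h2 (abs_nonneg _) (norm_nonneg _)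
            _ = (∑ k, |Ω j k|) * (‖β‖ * ‖v‖) := by ring
      _ = (∑ j, ∑ k, |Ω j k|) * (‖β‖ * ‖v‖) := by rw [Finset.sum_mul]
  rw [abs_div, _root_.abs_two, cΩ]
  calc |dotProduct v (Ω.mulVec β)| / 2
      ≤ (∑ j, ∑ k, |Ω j k|) * (‖β‖ * ‖v‖) / 2 := by linarith
    _ = (∑ j, ∑ k, |Ω j k|) / 2 * ‖β‖ * ‖v‖ := by ring

lemma continuous_mulVec (j : Fin m) : Continuous fun β : Fin m → ℝ => Ω.mulVec β j := by
  have h : (fun β : Fin m → ℝ => Ω.mulVec β j) = fun β => ∑ k, Ω j k * β k := by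
    funext β; simp [Matrix.mulVec, dotProduct]
  rw [h]
  exact continuous_finset_sum _ fun k _ => continuous_const.mul (continuous_apply k)

lemma continuous_Acl : Continuous fun β => Acl Ω β := by
  unfold Acl
  exact continuous_finset_sum _ fun j _ =>
    Continuous.smul ((continuous_mulVec Ω j).div_const 2) continuous_const

/-- The derivative of the integrand with respect to `α`. -/
def K' (F : SchwartzMap (Fin m → ℝ) ℂ) (G : (Fin m → ℝ) → ℂ) (α β : Fin m → ℝ) :
    (Fin m → ℝ) →L[ℝ] ℂ :=
  G β • (eC Ω α β • fderiv ℝ F (α - β) +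
    F (α - β) • (eC Ω α β • (Complex.I • Acl Ω β)))

lemma hasFDerivAt_integrand (F : SchwartzMap (Fin m → ℝ) ℂ) (G : (Fin m → ℝ) → ℂ)
    (β α₀ : Fin m → ℝ) :
    HasFDerivAt (fun α => eC Ω α β * F (α - β) * G β) (K' Ω F G α₀ β) α₀ := by
  have hc : HasFDerivAt (fun α => eC Ω α β) (eC Ω α₀ β • (Complex.I • Acl Ω β)) α₀ := by
    have h1 : HasFDerivAt (fun α => Complex.I * Acl Ω β α) (Complex.I • Acl Ω β) α₀ :=
      (Acl Ω β).hasFDerivAt.const_mul Complex.I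
    have h2 := h1.cexp
    have h3 : (fun α => Complex.exp (Complex.I * Acl Ω β α)) = fun α => eC Ω α β := by
      funext α
      rw [Acl_apply]
      rfl
    rw [h3] at h2
    have h4 : Complex.exp (Complex.I * Acl Ω β α₀) = eC Ω α₀ β := by rw [Acl_apply]; rfl
    rwa [h4] at h2
  have hd : HasFDerivAt (fun α => (F (α - β) : ℂ)) (fderiv ℝ F (α₀ - β)) α₀ := by
    have hsub : HasFDerivAt (fun α : Fin m → ℝ => α - β)
        (ContinuousLinearMap.id ℝ (Fin m → ℝ)) α₀ := (hasFDerivAt_id α₀).sub_const β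
    have hF : HasFDerivAt (⇑F) (fderiv ℝ F (α₀ - β)) (α₀ - β) :=
      (F.differentiable.differentiableAt).hasFDerivAt
    have := hF.comp α₀ hsub
    rwa [ContinuousLinearMap.comp_id] at this
  exact (hc.mul hd).mul_const (G β)

lemma K'_norm_le (F : SchwartzMap (Fin m → ℝ) ℂ) (G : (Fin m → ℝ) → ℂ)
    {M₀ M₁ : ℝ} (hM₀ : ∀ x, ‖F x‖ ≤ M₀) (hM₁ : ∀ x, ‖fderiv ℝ F x‖ ≤ M₁)
    (hM₀0 : 0 ≤ M₀) (α β : Fin m → ℝ) :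
    ‖K' Ω F G α β‖ ≤ ‖G β‖ * (M₁ + M₀ * (cΩ Ω * ‖β‖)) := by
  rw [K', show ‖G β • (eC Ω α β • fderiv ℝ (⇑F) (α - β) +
      F (α - β) • (eC Ω α β • (Complex.I • Acl Ω β)))‖
    = ‖G β‖ * ‖eC Ω α β • fderiv ℝ (⇑F) (α - β) +
      F (α - β) • (eC Ω α β • (Complex.I • Acl Ω β))‖ from
    norm_smul (G β) (eC Ω α β • fderiv ℝ (⇑F) (α - β) +
      F (α - β) • (eC Ω α β • (Complex.I • Acl Ω β)))]
  refine mul_le_mul_of_nonneg_left ?_ (norm_nonneg _)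
  have e1 : ‖eC Ω α β • fderiv ℝ (⇑F) (α - β)‖ ≤ M₁ := by
    rw [show ‖eC Ω α β • fderiv ℝ (⇑F) (α - β)‖
      = ‖eC Ω α β‖ * ‖fderiv ℝ (⇑F) (α - β)‖ from
      norm_smul (eC Ω α β) (fderiv ℝ (⇑F) (α - β)), norm_eC, one_mul]
    exact hM₁ _
  have e2 : ‖F (α - β) • (eC Ω α β • (Complex.I • Acl Ω β))‖ ≤ M₀ * (cΩ Ω * ‖β‖) := by
    rw [show ‖F (α - β) • (eC Ω α β • (Complex.I • Acl Ω β))‖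
        = ‖F (α - β)‖ * ‖eC Ω α β • (Complex.I • Acl Ω β)‖ from
        norm_smul (F (α - β)) (eC Ω α β • (Complex.I • Acl Ω β)),
      show ‖eC Ω α β • (Complex.I • Acl Ω β)‖
        = ‖eC Ω α β‖ * ‖Complex.I • Acl Ω β‖ from
        norm_smul (eC Ω α β) (Complex.I • Acl Ω β),
      norm_eC, one_mul,
      show ‖Complex.I • Acl Ω β‖ = ‖Complex.I‖ * ‖Acl Ω β‖ from
        norm_smul Complex.I (Acl Ω β),
      Complex.norm_I, one_mul]
    exact mul_le_mul (hM₀ _) (Acl_norm Ω β) (norm_nonneg _) hM₀0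
  calc ‖eC Ω α β • fderiv ℝ (⇑F) (α - β) +
        F (α - β) • (eC Ω α β • (Complex.I • Acl Ω β))‖
      ≤ ‖eC Ω α β • fderiv ℝ (⇑F) (α - β)‖ +
        ‖F (α - β) • (eC Ω α β • (Complex.I • Acl Ω β))‖ := norm_add_le _ _
    _ ≤ M₁ + M₀ * (cΩ Ω * ‖β‖) := add_le_add e1 e2

lemma continuous_K'aux (F : SchwartzMap (Fin m → ℝ) ℂ) (α : Fin m → ℝ) :
    Continuous fun β => eC Ω α β • fderiv ℝ (⇑F) (α - β) +
      F (α - β) • (eC Ω α β • (Complex.I • Acl Ω β)) := by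
  have hfd : Continuous (fderiv ℝ (⇑F)) :=
    (F.smooth ⊤).continuous_fderiv (by norm_num)
  have h1 : Continuous fun β : Fin m → ℝ => fderiv ℝ (⇑F) (α - β) :=
    hfd.comp (continuous_const.sub continuous_id)
  have h2 : Continuous fun β : Fin m → ℝ => (F (α - β) : ℂ) :=
    F.continuous.comp (continuous_const.sub continuous_id)
  exact ((continuous_eC Ω α).smul h1).add
    (h2.smul ((continuous_eC Ω α).smul ((continuous_Acl Ω).const_smul Complex.I)))

lemma K'_aesm (F : SchwartzMap (Fin m → ℝ) ℂ) {G : (Fin m → ℝ) → ℂ}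
    (hGm : Measurable G) (α : Fin m → ℝ) :
    AEStronglyMeasurable (fun β => K' Ω F G α β) volume := by
  unfold K'
  exact hGm.aestronglyMeasurable.smul (continuous_K'aux Ω F α).aestronglyMeasurable

lemma K'_integrable (F : SchwartzMap (Fin m → ℝ) ℂ) {G : (Fin m → ℝ) → ℂ}
    (hG : RD G) (α : Fin m → ℝ) :
    Integrable (fun β => K' Ω F G α β) := by
  obtain ⟨M₀, hM₀0, hM₀⟩ := F_bound F
  obtain ⟨M₁, hM₁0, hM₁⟩ := F_fderiv_bound F
  obtain ⟨C₀, hC₀0, hC₀⟩ := hG.norm_pow_bound 0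
  obtain ⟨C₁, hC₁0, hC₁⟩ := hG.norm_pow_bound 1
  refine Integrable.mono' (g := fun β => (M₁ * C₀ + M₀ * cΩ Ω * C₁) * w β)
    ((w_int.const_mul _)) (K'_aesm Ω F hG.1 α)
    (Filter.Eventually.of_forall fun β => ?_)
  have h1 := K'_norm_le Ω F G hM₀ hM₁ hM₀0.le α β
  refine h1.trans ?_
  have h2 : ‖G β‖ ≤ C₀ * w β := by simpa using hC₀ β
  have h3 : ‖β‖ * ‖G β‖ ≤ C₁ * w β := by simpa using hC₁ β
  have hw := (w_pos β).le
  calc ‖G β‖ * (M₁ + M₀ * (cΩ Ω * ‖β‖))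
      = M₁ * ‖G β‖ + M₀ * cΩ Ω * (‖β‖ * ‖G β‖) := by ring
    _ ≤ M₁ * (C₀ * w β) + M₀ * cΩ Ω * (C₁ * w β) := by
        gcongr
        exact mul_nonneg hM₀0.le (cΩ_nonneg Ω)
    _ = (M₁ * C₀ + M₀ * cΩ Ω * C₁) * w β := by ring

lemma hasFDerivAt_T (F : SchwartzMap (Fin m → ℝ) ℂ) {G : (Fin m → ℝ) → ℂ}
    (hG : RD G) (α₀ : Fin m → ℝ) :
    HasFDerivAt (T Ω F G) (∫ β, K' Ω F G α₀ β) α₀ := by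
  obtain ⟨M₀, hM₀0, hM₀⟩ := F_bound F
  obtain ⟨M₁, hM₁0, hM₁⟩ := F_fderiv_bound F
  have hbi : Integrable (fun β => ‖G β‖ * (M₁ + M₀ * (cΩ Ω * ‖β‖))) := by
    obtain ⟨C₀, hC₀0, hC₀⟩ := hG.norm_pow_bound 0
    obtain ⟨C₁, hC₁0, hC₁⟩ := hG.norm_pow_bound 1
    refine Integrable.mono' (g := fun β => (M₁ * C₀ + M₀ * cΩ Ω * C₁) * w β)
      (w_int.const_mul _)
      (hG.1.norm.aestronglyMeasurable.mul
        ((continuous_const.add (continuous_const.mul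
          (continuous_const.mul continuous_norm))).aestronglyMeasurable))
      (Filter.Eventually.of_forall fun β => ?_)
    have h2 : ‖G β‖ ≤ C₀ * w β := by simpa using hC₀ β
    have h3 : ‖β‖ * ‖G β‖ ≤ C₁ * w β := by simpa using hC₁ β
    have hnn : (0:ℝ) ≤ ‖G β‖ * (M₁ + M₀ * (cΩ Ω * ‖β‖)) := by
      have := cΩ_nonneg Ω
      positivity
    rw [Real.norm_eq_abs, _root_.abs_of_nonneg hnn]
    calc ‖G β‖ * (M₁ + M₀ * (cΩ Ω * ‖β‖))
        = M₁ * ‖G β‖ + M₀ * cΩ Ω * (‖β‖ * ‖G β‖) := by ring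
      _ ≤ M₁ * (C₀ * w β) + M₀ * cΩ Ω * (C₁ * w β) := by
          gcongr
          exact mul_nonneg hM₀0.le (cΩ_nonneg Ω)
      _ = (M₁ * C₀ + M₀ * cΩ Ω * C₁) * w β := by ring
  refine hasFDerivAt_integral_of_dominated_of_fderiv_le
    (F' := fun α β => K' Ω F G α β)
    (bound := fun β => ‖G β‖ * (M₁ + M₀ * (cΩ Ω * ‖β‖)))
    (Metric.ball_mem_nhds α₀ one_pos)
    (Filter.Eventually.of_forall fun α => T_intg_aesm Ω F hG.1 α)
    (T_intg_integrable Ω F hG α₀)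
    (K'_aesm Ω F hG.1 α₀)
    (Filter.Eventually.of_forall fun β α _ => K'_norm_le Ω F G hM₀ hM₁ hM₀0.le α β)
    hbi
    (Filter.Eventually.of_forall fun β α _ => hasFDerivAt_integrand Ω F G β α)

/-- The multiplier appearing after differentiating the twist. -/
def Gj (G : (Fin m → ℝ) → ℂ) (j : Fin m) : (Fin m → ℝ) → ℂ :=
  fun β => (Complex.I * ((Ω.mulVec β j / 2 : ℝ) : ℂ)) * G β

lemma RD.linCoordMul {G : (Fin m → ℝ) → ℂ} (hG : RD G) (j : Fin m) :
    RD fun β => ((Ω.mulVec β j / 2 : ℝ) : ℂ) * G β := by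
  have h1 : RD fun β => ∑ k, ((Ω j k / 2 : ℝ) : ℂ) * ((β k : ℂ) * G β) :=
    RD.sum fun k _ => (hG.coordMul k).smul _
  refine h1.congr fun β => ?_
  have hmv : Ω.mulVec β j = ∑ k, Ω j k * β k := by
    simp [Matrix.mulVec, dotProduct]
  rw [hmv]
  push_cast [Finset.sum_div, Finset.sum_mul]
  refine Finset.sum_congr rfl fun k _ => by ring

lemma RD.gj {G : (Fin m → ℝ) → ℂ} (hG : RD G) (j : Fin m) : RD (Gj Ω G j) := by
  have := (hG.linCoordMul Ω j).smul Complex.I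
  exact this.congr fun β => by unfold Gj; ring

lemma K'_apply_single (F : SchwartzMap (Fin m → ℝ) ℂ) (G : (Fin m → ℝ) → ℂ)
    (α β : Fin m → ℝ) (j : Fin m) :
    K' Ω F G α β (Pi.single j 1)
      = eC Ω α β * (LineDeriv.lineDerivOpCLM ℝ (SchwartzMap (Fin m → ℝ) ℂ) (F := SchwartzMap (Fin m → ℝ) ℂ) (Pi.single j 1 : Fin m → ℝ) F) (α - β) * G β
        + eC Ω α β * F (α - β) * Gj Ω G j β := by
  rw [K']
  simp only [ContinuousLinearMap.smul_apply, ContinuousLinearMap.add_apply,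
    LineDeriv.lineDerivOpCLM_apply, SchwartzMap.lineDerivOp_apply_eq_fderiv, Gj, Acl_single, smul_eq_mul]
  ring

lemma clm_eq_sum (L : (Fin m → ℝ) →L[ℝ] ℂ) :
    L = ∑ j, L (Pi.single j 1) • cj j := by
  ext v
  have hv : v = ∑ i, v i • (Pi.single i 1 : Fin m → ℝ) := by
    conv_lhs => rw [pi_eq_sum_univ v]
    refine Finset.sum_congr rfl fun i _ => ?_
    congr 1
    ext k
    simp [Pi.single_apply, eq_comm]
  calc L v = L (∑ i, v i • (Pi.single i 1 : Fin m → ℝ)) := by rw [← hv]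
    _ = ∑ i, v i • L (Pi.single i 1) := by rw [map_sum]; exact Finset.sum_congr rfl fun i _ => L.map_smul _ _
    _ = (∑ j, L (Pi.single j 1) • cj j) v := by
        rw [ContinuousLinearMap.sum_apply]
        refine Finset.sum_congr rfl fun i _ => ?_
        rw [ContinuousLinearMap.smul_apply, cj_apply, smul_eq_mul, Complex.real_smul]
        ring

lemma integral_K'_eq (F : SchwartzMap (Fin m → ℝ) ℂ) {G : (Fin m → ℝ) → ℂ}
    (hG : RD G) (α : Fin m → ℝ) :
    (∫ β, K' Ω F G α β)
      = ∑ j, (T Ω (LineDeriv.lineDerivOpCLM ℝ (SchwartzMap (Fin m → ℝ) ℂ) (F := SchwartzMap (Fin m → ℝ) ℂ) (Pi.single j 1 : Fin m → ℝ) F) G α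
          + T Ω F (Gj Ω G j) α) • cj j := by
  rw [clm_eq_sum (∫ β, K' Ω F G α β)]
  refine Finset.sum_congr rfl fun j _ => ?_
  congr 1
  rw [ContinuousLinearMap.integral_apply (K'_integrable Ω F hG α) (Pi.single j 1)]
  rw [show (fun β => K' Ω F G α β (Pi.single j 1))
    = fun β => eC Ω α β * (LineDeriv.lineDerivOpCLM ℝ (SchwartzMap (Fin m → ℝ) ℂ) (F := SchwartzMap (Fin m → ℝ) ℂ) (Pi.single j 1 : Fin m → ℝ) F) (α - β) * G β
        + eC Ω α β * F (α - β) * Gj Ω G j β from funext fun β => K'_apply_single Ω F G α β j]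
  rw [MeasureTheory.integral_add (T_intg_integrable Ω _ hG α)
    (T_intg_integrable Ω F (hG.gj Ω j) α)]
  rfl

/-- The linear span generated by twisted convolutions. -/
def Good (f : (Fin m → ℝ) → ℂ) : Prop :=
  f ∈ Submodule.span ℂ {f | ∃ (F : SchwartzMap (Fin m → ℝ) ℂ) (G : (Fin m → ℝ) → ℂ),
    RD G ∧ f = T Ω F G}

lemma good_T (F : SchwartzMap (Fin m → ℝ) ℂ) {G : (Fin m → ℝ) → ℂ} (hG : RD G) :
    Good Ω (T Ω F G) :=
  Submodule.subset_span ⟨F, G, hG, rfl⟩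

lemma good_fderiv {f : (Fin m → ℝ) → ℂ} (hf : Good Ω f) :
    ∃ h : Fin m → (Fin m → ℝ) → ℂ, (∀ j, Good Ω (h j)) ∧
      ∀ α, HasFDerivAt f (∑ j, h j α • cj j) α := by
  induction hf using Submodule.span_induction with
  | mem g hg =>
    obtain ⟨F, G, hG, rfl⟩ := hg
    refine ⟨fun j α => T Ω (LineDeriv.lineDerivOpCLM ℝ (SchwartzMap (Fin m → ℝ) ℂ) (F := SchwartzMap (Fin m → ℝ) ℂ) (Pi.single j 1 : Fin m → ℝ) F) G α
      + T Ω F (Gj Ω G j) α, fun j => ?_, fun α => ?_⟩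
    · exact Submodule.add_mem _ (good_T Ω _ hG) (good_T Ω F (hG.gj Ω j))
    · have h1 := hasFDerivAt_T Ω F hG α
      rwa [integral_K'_eq Ω F hG α] at h1
  | zero =>
    refine ⟨fun _ _ => 0, fun j => Submodule.zero_mem _, fun α => ?_⟩
    have h0 : (∑ j : Fin m, (0:ℂ) • cj j) = 0 := Finset.sum_eq_zero fun j _ => zero_smul ℂ (cj j)
    rw [h0]
    exact hasFDerivAt_const (𝕜 := ℝ) (0 : ℂ) α
  | add x y hx hy ihx ihy =>
    obtain ⟨h₁, g₁, d₁⟩ := ihx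
    obtain ⟨h₂, g₂, d₂⟩ := ihy
    refine ⟨fun j α => h₁ j α + h₂ j α, fun j => Submodule.add_mem _ (g₁ j) (g₂ j),
      fun α => ?_⟩
    have := (d₁ α).add (d₂ α)
    have he : (∑ j, (h₁ j α + h₂ j α) • cj j)
        = (∑ j, h₁ j α • cj j) + ∑ j, h₂ j α • cj j := by
      rw [← Finset.sum_add_distrib]
      exact Finset.sum_congr rfl fun j _ => add_smul (h₁ j α) (h₂ j α) (cj j)
    rw [he]
    exact this
  | smul c x hx ih =>
    obtain ⟨h₁, g₁, d₁⟩ := ih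
    refine ⟨fun j α => c * h₁ j α, fun j => Submodule.smul_mem _ c (g₁ j), fun α => ?_⟩
    have := (d₁ α).const_smul c
    have he : (∑ j, (c * h₁ j α) • cj j) = c • ∑ j, h₁ j α • cj j := by
      rw [Finset.smul_sum]
      exact Finset.sum_congr rfl fun j _ => mul_smul c (h₁ j α) (cj j)
    rw [he]
    exact this

/-- Scalar multiplication against `cj j`, as a continuous linear map. -/
def Bc (j : Fin m) : ℂ →L[ℝ] ((Fin m → ℝ) →L[ℝ] ℂ) :=
  (((ContinuousLinearMap.id ℂ ℂ).smulRight (cj j)).restrictScalars ℝ)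

lemma Bc_apply (j : Fin m) (z : ℂ) : Bc j z = z • cj j := by
  simp [Bc]

lemma good_differentiable {f : (Fin m → ℝ) → ℂ} (hf : Good Ω f) :
    Differentiable ℝ f := by
  obtain ⟨h, _, hd⟩ := good_fderiv Ω hf
  exact fun α => (hd α).differentiableAt

lemma good_fderiv_eq {f : (Fin m → ℝ) → ℂ} (hf : Good Ω f) :
    ∃ h : Fin m → (Fin m → ℝ) → ℂ, (∀ j, Good Ω (h j)) ∧
      fderiv ℝ f = fun α => ∑ j, Bc j (h j α) := by
  obtain ⟨h, hg, hd⟩ := good_fderiv Ω hf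
  refine ⟨h, hg, funext fun α => ?_⟩
  rw [(hd α).fderiv]
  exact Finset.sum_congr rfl fun j _ => (Bc_apply j (h j α)).symm

lemma good_contDiff (N : ℕ) : ∀ {f : (Fin m → ℝ) → ℂ}, Good Ω f → ContDiff ℝ N f := by
  induction N with
  | zero =>
    intro f hf
    rw [show ((0:ℕ) : WithTop ℕ∞) = 0 from rfl, contDiff_zero]
    exact (good_differentiable Ω hf).continuous
  | succ N ih =>
    intro f hf
    obtain ⟨h, hg, hfd⟩ := good_fderiv_eq Ω hf
    have hcast : ((N + 1 : ℕ) : WithTop ℕ∞) = (N : WithTop ℕ∞) + 1 := by push_cast; rfl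
    rw [hcast, contDiff_succ_iff_fderiv]
    refine ⟨good_differentiable Ω hf, ?_, ?_⟩
    · intro hω
      exact absurd hω (by exact_mod_cast WithTop.natCast_ne_top N)
    · rw [hfd]
      exact ContDiff.sum fun j _ => (Bc j).contDiff.comp (ih (hg j))

lemma good_smooth {f : (Fin m → ℝ) → ℂ} (hf : Good Ω f) : ContDiff ℝ ∞ f :=
  contDiff_infty.mpr fun N => good_contDiff Ω N hf

lemma good_bound0 {f : (Fin m → ℝ) → ℂ} (hf : Good Ω f) (k : ℕ) :
    ∃ C, ∀ α, ‖α‖ ^ k * ‖f α‖ ≤ C := by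
  induction hf using Submodule.span_induction with
  | mem g hg =>
    obtain ⟨F, G, hG, rfl⟩ := hg
    choose CG hCG0 hCGb using fun i : ℕ => hG.norm_pow_bound i
    set D := ∑ i ∈ Finset.range (k + 1), CG i with hD
    have hD0 : 0 ≤ D := Finset.sum_nonneg fun i _ => hCG0 i
    have hDb : ∀ i ∈ Finset.range (k + 1), ∀ β, ‖β‖ ^ i * ‖G β‖ ≤ D * w β := by
      intro i hi β
      refine (hCGb i β).trans (mul_le_mul_of_nonneg_right ?_ (w_pos β).le)
      exact Finset.single_le_sum (f := CG) (fun i _ => hCG0 i) hi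
    choose M hM0 hMb using fun i : ℕ => F.decay i 0
    have hMb' : ∀ (i : ℕ) x, ‖x‖ ^ i * ‖F x‖ ≤ M i := by
      intro i x
      have := hMb i x
      rwa [norm_iteratedFDeriv_zero] at this
    set S := ∑ i ∈ Finset.range (k + 1), (k.choose i : ℝ) * M i with hS
    have hS0 : 0 ≤ S := Finset.sum_nonneg fun i _ =>
      mul_nonneg (by positivity) (hM0 i).le
    have key : ∀ α β : Fin m → ℝ,
        ‖α‖ ^ k * (‖F (α - β)‖ * ‖G β‖) ≤ S * (D * w β) := by
      intro α β
      have hab : ‖α‖ ≤ ‖α - β‖ + ‖β‖ := by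
        calc ‖α‖ = ‖(α - β) + β‖ := by rw [sub_add_cancel]
          _ ≤ ‖α - β‖ + ‖β‖ := norm_add_le _ _
      have hpow : ‖α‖ ^ k ≤ ∑ i ∈ Finset.range (k + 1),
          ‖α - β‖ ^ i * ‖β‖ ^ (k - i) * (k.choose i : ℝ) := by
        calc ‖α‖ ^ k ≤ (‖α - β‖ + ‖β‖) ^ k := by gcongr
          _ = _ := add_pow _ _ _
      calc ‖α‖ ^ k * (‖F (α - β)‖ * ‖G β‖)
          ≤ (∑ i ∈ Finset.range (k + 1),
              ‖α - β‖ ^ i * ‖β‖ ^ (k - i) * (k.choose i : ℝ)) * (‖F (α - β)‖ * ‖G β‖) := by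
            refine mul_le_mul_of_nonneg_right hpow (by positivity)
        _ = ∑ i ∈ Finset.range (k + 1),
            (k.choose i : ℝ) * ((‖α - β‖ ^ i * ‖F (α - β)‖) * (‖β‖ ^ (k - i) * ‖G β‖)) := by
            rw [Finset.sum_mul]
            exact Finset.sum_congr rfl fun i _ => by ring
        _ ≤ ∑ i ∈ Finset.range (k + 1), (k.choose i : ℝ) * (M i * (D * w β)) := by
            refine Finset.sum_le_sum fun i hi => ?_
            refine mul_le_mul_of_nonneg_left ?_ (by positivity)
            refine mul_le_mul (hMb' i _) (hDb (k - i) (by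
              simp only [Finset.mem_range] at *
              omega) β) (by positivity) ((hM0 i).le)
        _ = S * (D * w β) := by
            generalize (D * w β) = Y
            rw [hS, Finset.sum_mul]
            exact Finset.sum_congr rfl fun i _ => by ring
    refine ⟨S * D * (∫ β : Fin m → ℝ, w β), fun α => ?_⟩
    have h1 : ‖T Ω F G α‖ ≤ ∫ β, ‖F (α - β)‖ * ‖G β‖ := by
      refine (norm_integral_le_integral_norm _).trans ?_
      refine le_of_eq (integral_congr_ae (Filter.Eventually.of_forall fun β => ?_))
      show ‖eC Ω α β * F (α - β) * G β‖ = ‖F (α - β)‖ * ‖G β‖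
      rw [norm_mul, norm_mul, norm_eC, one_mul]
    calc ‖α‖ ^ k * ‖T Ω F G α‖ ≤ ‖α‖ ^ k * ∫ β, ‖F (α - β)‖ * ‖G β‖ :=
          mul_le_mul_of_nonneg_left h1 (by positivity)
      _ = ∫ β, ‖α‖ ^ k * (‖F (α - β)‖ * ‖G β‖) :=
          (MeasureTheory.integral_const_mul _ _).symm
      _ ≤ ∫ β, S * (D * w β) := by
          refine integral_mono_of_nonneg (Filter.Eventually.of_forall fun β => by positivity)
            ((w_int.const_mul D).const_mul S) (Filter.Eventually.of_forall fun β => key α β)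
      _ = S * (D * ∫ β : Fin m → ℝ, w β) := by
          rw [MeasureTheory.integral_const_mul, MeasureTheory.integral_const_mul]
      _ = S * D * (∫ β : Fin m → ℝ, w β) := by ring
  | zero => exact ⟨0, fun α => by simp⟩
  | add x y hx hy ihx ihy =>
    obtain ⟨C₁, h₁⟩ := ihx
    obtain ⟨C₂, h₂⟩ := ihy
    refine ⟨C₁ + C₂, fun α => ?_⟩
    calc ‖α‖ ^ k * ‖(x + y) α‖ ≤ ‖α‖ ^ k * (‖x α‖ + ‖y α‖) := by
          gcongr
          exact norm_add_le _ _
      _ = ‖α‖ ^ k * ‖x α‖ + ‖α‖ ^ k * ‖y α‖ := by ring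
      _ ≤ C₁ + C₂ := add_le_add (h₁ α) (h₂ α)
  | smul c x hx ih =>
    obtain ⟨C, h₁⟩ := ih
    refine ⟨‖c‖ * C, fun α => ?_⟩
    have : ‖(c • x) α‖ = ‖c‖ * ‖x α‖ := by
      rw [Pi.smul_apply, norm_smul]
    rw [this]
    calc ‖α‖ ^ k * (‖c‖ * ‖x α‖) = ‖c‖ * (‖α‖ ^ k * ‖x α‖) := by ring
      _ ≤ ‖c‖ * C := mul_le_mul_of_nonneg_left (h₁ α) (norm_nonneg c)

set_option synthInstance.maxHeartbeats 1000000 in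
set_option maxHeartbeats 1000000 in
lemma good_decay (N : ℕ) : ∀ {f : (Fin m → ℝ) → ℂ}, Good Ω f → ∀ k : ℕ,
    ∃ C, ∀ α, ‖α‖ ^ k * ‖iteratedFDeriv ℝ N f α‖ ≤ C := by
  induction N with
  | zero =>
    intro f hf k
    obtain ⟨C, hC⟩ := good_bound0 Ω hf k
    exact ⟨C, fun α => by
      rw [norm_iteratedFDeriv_zero]
      exact hC α⟩
  | succ N ih =>
    intro f hf k
    obtain ⟨h, hg, hfd⟩ := good_fderiv_eq Ω hf
    choose C hC using fun j => ih (hg j) k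
    refine ⟨∑ j, ‖Bc (m := m) j‖ * C j, fun α => ?_⟩
    have e1 : ‖iteratedFDeriv ℝ (N + 1) f α‖ = ‖iteratedFDeriv ℝ N (fderiv ℝ f) α‖ :=
      norm_iteratedFDeriv_fderiv.symm
    rw [e1, hfd]
    have hcd : ∀ j : Fin m, ContDiff ℝ N (fun α => Bc j (h j α)) := fun j =>
      (Bc j).contDiff.comp (good_contDiff Ω N (hg j))
    have e2 : iteratedFDeriv ℝ N (fun α => ∑ j, Bc j (h j α)) α
        = ∑ j, iteratedFDeriv ℝ N (fun α => Bc j (h j α)) α := by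
      have := iteratedFDeriv_sum (u := Finset.univ)
        (f := fun j (α : Fin m → ℝ) => Bc j (h j α)) (i := N)
        (fun j _ => hcd j)
      have h2 := congrFun this α
      rw [h2]
      exact Finset.sum_apply _ _ _
    rw [e2]
    have e3 : ∀ j : Fin m, ‖iteratedFDeriv ℝ N (fun α => Bc j (h j α)) α‖
        ≤ ‖Bc (m := m) j‖ * ‖iteratedFDeriv ℝ N (h j) α‖ := by
      intro j
      have hcomp : iteratedFDeriv ℝ N (fun α => Bc j (h j α)) α
          = (Bc j).compContinuousMultilinearMap (iteratedFDeriv ℝ N (h j) α) := by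
        have := (Bc j).iteratedFDeriv_comp_left (f := h j)
          (x := α) (good_contDiff Ω N (hg j)).contDiffAt (le_refl (N : WithTop ℕ∞))
        exact this
      rw [hcomp]
      exact (Bc j).norm_compContinuousMultilinearMap_le _
    calc ‖α‖ ^ k * ‖∑ j, iteratedFDeriv ℝ N (fun α => Bc j (h j α)) α‖
        ≤ ‖α‖ ^ k * ∑ j, ‖iteratedFDeriv ℝ N (fun α => Bc j (h j α)) α‖ := by
          refine mul_le_mul_of_nonneg_left (norm_sum_le _ _) (by positivity)
      _ = ∑ j, ‖α‖ ^ k * ‖iteratedFDeriv ℝ N (fun α => Bc j (h j α)) α‖ := by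
          rw [Finset.mul_sum]
      _ ≤ ∑ j, ‖Bc (m := m) j‖ * C j := by
          refine Finset.sum_le_sum fun j _ => ?_
          calc ‖α‖ ^ k * ‖iteratedFDeriv ℝ N (fun α => Bc j (h j α)) α‖
              ≤ ‖α‖ ^ k * (‖Bc (m := m) j‖ * ‖iteratedFDeriv ℝ N (h j) α‖) := by
                refine mul_le_mul_of_nonneg_left (e3 j) (by positivity)
            _ = ‖Bc (m := m) j‖ * (‖α‖ ^ k * ‖iteratedFDeriv ℝ N (h j) α‖) := by ring
            _ ≤ ‖Bc (m := m) j‖ * C j :=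
                mul_le_mul_of_nonneg_left (hC j α) (norm_nonneg (Bc (m := m) j))

end OmegaStuff

end

end TC



open MeasureTheory Real Complex in
/-- the twisted convolution of a Schwartz function F with a rapidly
decaying measurable function G is a Schwartz function. -/
theorem twisted_convolution_schwartz (n : ℕ) (Ω : Matrix (Fin (2 * n)) (Fin (2 * n)) ℝ)
    (F : SchwartzMap (Vn (2 * n)) ℂ) (G : Vn (2 * n) → ℂ)
    (hGm : Measurable G)
    (hG : ∀ a : Fin (2 * n) → ℕ, ∃ C, ∀ α, |mono a α| * ‖G α‖ ≤ C) :
    IsSchwartz (fun α : Vn (2 * n) =>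
      ∫ β : Vn (2 * n), Complex.exp (Complex.I * ((dotProduct α (Ω.mulVec β) / 2 : ℝ) : ℂ))
        * F (α - β) * G β) := by
  have hG' : TC.RD G := ⟨hGm, hG⟩
  have hgood := TC.good_T Ω F hG'
  exact ⟨⟨TC.T Ω F G, TC.good_smooth Ω hgood, fun k N => TC.good_decay Ω N hgood k⟩,
    fun x => rfl⟩
end

section
/- For Schwartz functions ψ, φ on R^n, the squared modulus of their L² inner product satisfies |⟨ψ, φ⟩|² = (2π)^n ∫ W_ψ(α) W_φ(α) dα, where W_ψ and W_φ are the Wigner functions of ψ and φ. -/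
open MeasureTheory Real Complex

noncomputable section MoyalAux
namespace MoyalAux
open FourierTransform SchwartzMap RealInnerProductSpace

section DerivAux
variable {E F : Type*} [NormedAddCommGroup E] [NormedSpace ℝ E]
  [NormedAddCommGroup F] [NormedSpace ℝ F]

lemma my_iteratedFDeriv_comp_const_add {f : E → F} (hf : ContDiff ℝ (⊤:ℕ∞) f) (a : E) :
    ∀ (j : ℕ) (x : E), iteratedFDeriv ℝ j (fun y => f (a + y)) x = iteratedFDeriv ℝ j f (a + x) := by
  intro j
  induction j with
  | zero => intro x; ext m; simp
  | succ j ih =>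
    intro x
    have hdiff : Differentiable ℝ (iteratedFDeriv ℝ j f) :=
      hf.differentiable_iteratedFDeriv (by exact_mod_cast WithTop.coe_lt_top _)
    have hT : HasFDerivAt (fun y : E => a + y) (ContinuousLinearMap.id ℝ E) x := by
      simpa using (hasFDerivAt_id x).const_add a
    have hcomp : HasFDerivAt (fun y => iteratedFDeriv ℝ j f (a + y))
        (fderiv ℝ (iteratedFDeriv ℝ j f) (a + x)) x := by
      exact ((hdiff (a + x)).hasFDerivAt.comp x hT)
    ext m
    rw [iteratedFDeriv_succ_apply_left, iteratedFDeriv_succ_apply_left]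
    have h1 : (fun y => iteratedFDeriv ℝ j (fun z => f (a + z)) y)
        = fun y => iteratedFDeriv ℝ j f (a + y) := funext ih
    rw [show fderiv ℝ (iteratedFDeriv ℝ j fun y => f (a + y)) x
        = fderiv ℝ (iteratedFDeriv ℝ j f) (a + x) by
      rw [show (iteratedFDeriv ℝ j fun y => f (a + y)) = fun y => iteratedFDeriv ℝ j f (a + y)
        from funext ih]
      exact hcomp.fderiv]

lemma my_norm_iteratedFDeriv_comp_smul {f : E → F} (hf : ContDiff ℝ (⊤:ℕ∞) f) {c : ℝ}
    (hc : |c| ≤ 1) (j : ℕ) (x : E) :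
    ‖iteratedFDeriv ℝ j (fun y => f (c • y)) x‖ ≤ ‖iteratedFDeriv ℝ j f (c • x)‖ := by
  set L : E →L[ℝ] E := c • ContinuousLinearMap.id ℝ E with hL
  have hfc : (fun y => f (c • y)) = f ∘ L := rfl
  rw [hfc, L.iteratedFDeriv_comp_right hf x (by exact_mod_cast le_top)]
  refine le_trans (ContinuousMultilinearMap.norm_compContinuousLinearMap_le _ _) ?_
  have hLnorm : ‖L‖ ≤ 1 := by
    rw [hL]
    refine le_trans (norm_smul_le c (ContinuousLinearMap.id ℝ E)) ?_
    calc ‖c‖ * ‖ContinuousLinearMap.id ℝ E‖ ≤ 1 * 1 := by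
          refine mul_le_mul ?_ ContinuousLinearMap.norm_id_le (norm_nonneg _) zero_le_one
          simpa [Real.norm_eq_abs] using hc
      _ = 1 := by norm_num
  calc ‖iteratedFDeriv ℝ j f (L x)‖ * ∏ _i : Fin j, ‖L‖
      ≤ ‖iteratedFDeriv ℝ j f (L x)‖ * 1 := by
        refine mul_le_mul_of_nonneg_left ?_ (norm_nonneg _)
        exact Finset.prod_le_one (fun _ _ => norm_nonneg _) (fun _ _ => hLnorm)
    _ = ‖iteratedFDeriv ℝ j f (c • x)‖ := by rw [mul_one]; rfl

lemma my_norm_iteratedFDeriv_affine {f : E → F} (hf : ContDiff ℝ (⊤:ℕ∞) f) {c : ℝ}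
    (hc : |c| ≤ 1) (a : E) (j : ℕ) (x : E) :
    ‖iteratedFDeriv ℝ j (fun y => f (a + c • y)) x‖ ≤ ‖iteratedFDeriv ℝ j f (a + c • x)‖ := by
  have h1 : (fun y => f (a + c • y)) = (fun z => f (a + z)) ∘ (fun y : E => c • y) := rfl
  have h2 : ContDiff ℝ (⊤:ℕ∞) (fun z => f (a + z)) :=
    hf.comp ((contDiff_const.add contDiff_id))
  calc ‖iteratedFDeriv ℝ j (fun y => f (a + c • y)) x‖
      ≤ ‖iteratedFDeriv ℝ j (fun z => f (a + z)) (c • x)‖ :=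
        my_norm_iteratedFDeriv_comp_smul h2 hc j x
    _ = ‖iteratedFDeriv ℝ j f (a + c • x)‖ := by
        rw [my_iteratedFDeriv_comp_const_add hf a j (c • x)]

lemma my_norm_iteratedFDeriv_conj (h : E → ℂ) (j : ℕ) (x : E) :
    ‖iteratedFDeriv ℝ j (fun y => (starRingEnd ℂ) (h y)) x‖ = ‖iteratedFDeriv ℝ j h x‖ := by
  have : (fun y => (starRingEnd ℂ) (h y)) = (⇑Complex.conjLIE) ∘ h := rfl
  rw [this, Complex.conjLIE.norm_iteratedFDeriv_comp_left h x j]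

end DerivAux

abbrev Eu (n : ℕ) := EuclideanSpace ℝ (Fin n)

variable {n : ℕ}

/-- The Wigner-type kernel at a fixed point `x`. -/
def ker (f g : 𝓢(Eu n, ℂ)) (x : Eu n) : Eu n → ℂ :=
  fun y => f (x - (2:ℝ)⁻¹ • y) * (starRingEnd ℂ) (g (x + (2:ℝ)⁻¹ • y))

lemma affine_contDiff (x : Eu n) (c : ℝ) : ContDiff ℝ (⊤:ℕ∞) (fun y : Eu n => x + c • y) :=
  contDiff_const.add (contDiff_id.const_smul c)

lemma kerA_contDiff (f : 𝓢(Eu n, ℂ)) (x : Eu n) (c : ℝ) :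
    ContDiff ℝ (⊤:ℕ∞) (fun y : Eu n => f (x + c • y)) :=
  f.smooth'.comp (affine_contDiff x c)

lemma kerB_contDiff (g : 𝓢(Eu n, ℂ)) (x : Eu n) (c : ℝ) :
    ContDiff ℝ (⊤:ℕ∞) (fun y : Eu n => (starRingEnd ℂ) (g (x + c • y))) := by
  exact ((Complex.conjCLE : ℂ ≃L[ℝ] ℂ).toContinuousLinearMap.contDiff).comp
    (kerA_contDiff g x c)

lemma sub_form_eq (f : 𝓢(Eu n, ℂ)) (x : Eu n) :
    (fun y : Eu n => f (x - (2:ℝ)⁻¹ • y)) = fun y : Eu n => f (x + (-2⁻¹ : ℝ) • y) :=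
  funext fun y => by rw [sub_eq_add_neg, ← neg_smul]

lemma kerA2_contDiff (f : 𝓢(Eu n, ℂ)) (x : Eu n) :
    ContDiff ℝ (⊤:ℕ∞) (fun y : Eu n => f (x - (2:ℝ)⁻¹ • y)) := by
  rw [sub_form_eq]
  exact kerA_contDiff f x _

lemma ker_contDiff (f g : 𝓢(Eu n, ℂ)) (x : Eu n) : ContDiff ℝ (⊤:ℕ∞) (ker f g x) :=
  (kerA2_contDiff f x).mul (kerB_contDiff g x _)

lemma ker_bound (f g : 𝓢(Eu n, ℂ)) (j m : ℕ) :
    ∃ C : ℝ, 0 ≤ C ∧ ∀ (x y : Eu n),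
      (1 + ‖x‖) ^ m * ((1 + ‖y‖) ^ (n + 1) *
        ‖iteratedFDeriv ℝ j (ker f g x) y‖) ≤ C := by
  set M := m + (n + 1) with hM
  set Cf : ℝ := 2 ^ M * ((Finset.Iic (M, j)).sup fun p => SchwartzMap.seminorm ℝ p.1 p.2) f
    with hCfdef
  set Cg : ℝ := 2 ^ M * ((Finset.Iic (M, j)).sup fun p => SchwartzMap.seminorm ℝ p.1 p.2) g
    with hCgdef
  have hCf : 0 ≤ Cf := by positivity
  have hCg : 0 ≤ Cg := by positivity
  refine ⟨2 ^ j * (Cf * Cg), by positivity, fun x y => ?_⟩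
  set u := x + (-2⁻¹ : ℝ) • y with hu
  set v := x + (2⁻¹ : ℝ) • y with hv
  have hxle : (1:ℝ) + ‖x‖ ≤ (1 + ‖u‖) * (1 + ‖v‖) := by
    have h1 : ‖u + v‖ ≤ ‖u‖ + ‖v‖ := norm_add_le u v
    have h2 : u + v = (2:ℝ) • x := by rw [hu, hv]; module
    have h3 : ‖(2:ℝ) • x‖ = 2 * ‖x‖ := by rw [norm_smul]; norm_num
    rw [h2, h3] at h1
    nlinarith [norm_nonneg x, norm_nonneg u, norm_nonneg v]
  have hyle : (1:ℝ) + ‖y‖ ≤ (1 + ‖u‖) * (1 + ‖v‖) := by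
    have h1 : ‖v - u‖ ≤ ‖v‖ + ‖u‖ := norm_sub_le v u
    have h2 : v - u = y := by rw [hu, hv]; module
    rw [h2] at h1
    nlinarith [norm_nonneg y, norm_nonneg u, norm_nonneg v]
  have key : (1 + ‖x‖) ^ m * (1 + ‖y‖) ^ (n + 1) ≤ (1 + ‖u‖) ^ M * (1 + ‖v‖) ^ M := by
    have h1 : (1 + ‖x‖) ^ m * (1 + ‖y‖) ^ (n + 1)
        ≤ ((1 + ‖u‖) * (1 + ‖v‖)) ^ m * ((1 + ‖u‖) * (1 + ‖v‖)) ^ (n + 1) := by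
      gcongr <;> positivity
    calc (1 + ‖x‖) ^ m * (1 + ‖y‖) ^ (n + 1)
        ≤ ((1 + ‖u‖) * (1 + ‖v‖)) ^ m * ((1 + ‖u‖) * (1 + ‖v‖)) ^ (n + 1) := h1
      _ = ((1 + ‖u‖) * (1 + ‖v‖)) ^ M := by rw [← pow_add]
      _ = (1 + ‖u‖) ^ M * (1 + ‖v‖) ^ M := mul_pow _ _ _
  have ha := kerA2_contDiff f x
  have hb := kerB_contDiff g x (2⁻¹ : ℝ)
  have hmul := norm_iteratedFDeriv_mul_le ha hb y (n := j) (by exact_mod_cast le_top)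
  calc (1 + ‖x‖) ^ m * ((1 + ‖y‖) ^ (n + 1) * ‖iteratedFDeriv ℝ j (ker f g x) y‖)
      ≤ (1 + ‖x‖) ^ m * ((1 + ‖y‖) ^ (n + 1) * ∑ i ∈ Finset.range (j + 1),
          (j.choose i : ℝ) * ‖iteratedFDeriv ℝ i (fun y => f (x - (2:ℝ)⁻¹ • y)) y‖ *
            ‖iteratedFDeriv ℝ (j - i) (fun y => (starRingEnd ℂ) (g (x + (2⁻¹:ℝ) • y))) y‖) := by
        gcongr
        exact hmul
    _ = ∑ i ∈ Finset.range (j + 1), (j.choose i : ℝ) *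
          ((1 + ‖x‖) ^ m * (1 + ‖y‖) ^ (n + 1) *
            (‖iteratedFDeriv ℝ i (fun y => f (x - (2:ℝ)⁻¹ • y)) y‖ *
              ‖iteratedFDeriv ℝ (j - i) (fun y => (starRingEnd ℂ) (g (x + (2⁻¹:ℝ) • y))) y‖)) := by
        rw [Finset.mul_sum, Finset.mul_sum]
        refine Finset.sum_congr rfl fun i _ => by ring
    _ ≤ ∑ i ∈ Finset.range (j + 1), (j.choose i : ℝ) * (Cf * Cg) := by
        refine Finset.sum_le_sum fun i hi => ?_
        have hij : i ≤ j := Nat.lt_succ_iff.mp (Finset.mem_range.mp hi)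
        refine mul_le_mul_of_nonneg_left ?_ (by positivity)
        have hai : ‖iteratedFDeriv ℝ i (fun y => f (x - (2:ℝ)⁻¹ • y)) y‖
            ≤ ‖iteratedFDeriv ℝ i (⇑f) u‖ := by
          rw [sub_form_eq]
          exact my_norm_iteratedFDeriv_affine f.smooth'
            (by rw [abs_le]; constructor <;> norm_num) x i y
        have hbi : ‖iteratedFDeriv ℝ (j - i) (fun y => (starRingEnd ℂ) (g (x + (2⁻¹:ℝ) • y))) y‖
            ≤ ‖iteratedFDeriv ℝ (j - i) (⇑g) v‖ := by
          rw [my_norm_iteratedFDeriv_conj (fun y => g (x + (2⁻¹:ℝ) • y)) (j - i) y]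
          exact my_norm_iteratedFDeriv_affine g.smooth' (by rw [abs_le]; constructor <;> norm_num) x (j - i) y
        have hfu : (1 + ‖u‖) ^ M * ‖iteratedFDeriv ℝ i (⇑f) u‖ ≤ Cf :=
          one_add_le_sup_seminorm_apply (m := (M, j)) le_rfl hij f u
        have hgv : (1 + ‖v‖) ^ M * ‖iteratedFDeriv ℝ (j - i) (⇑g) v‖ ≤ Cg :=
          one_add_le_sup_seminorm_apply (m := (M, j)) le_rfl (Nat.sub_le j i) g v
        calc (1 + ‖x‖) ^ m * (1 + ‖y‖) ^ (n + 1) *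
              (‖iteratedFDeriv ℝ i (fun y => f (x - (2:ℝ)⁻¹ • y)) y‖ *
                ‖iteratedFDeriv ℝ (j - i) (fun y => (starRingEnd ℂ) (g (x + (2⁻¹:ℝ) • y))) y‖)
            ≤ ((1 + ‖u‖) ^ M * (1 + ‖v‖) ^ M) *
              (‖iteratedFDeriv ℝ i (⇑f) u‖ * ‖iteratedFDeriv ℝ (j - i) (⇑g) v‖) := by
              refine mul_le_mul key ?_ (by positivity) (by positivity)
              exact mul_le_mul hai hbi (norm_nonneg _) (norm_nonneg _)
          _ = ((1 + ‖u‖) ^ M * ‖iteratedFDeriv ℝ i (⇑f) u‖) *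
              ((1 + ‖v‖) ^ M * ‖iteratedFDeriv ℝ (j - i) (⇑g) v‖) := by ring
          _ ≤ Cf * Cg := by
              refine mul_le_mul hfu hgv (by positivity) hCf
    _ = 2 ^ j * (Cf * Cg) := by
        rw [← Finset.sum_mul]
        norm_cast
        rw [Nat.sum_range_choose]

lemma aux_integrable_pow {k : ℕ} (hk : n < k) :
    Integrable (fun y : Eu n => ((1 + ‖y‖ : ℝ) ^ k)⁻¹) := by
  have h := integrable_one_add_norm (E := Eu n) (μ := volume) (r := k)
    (by rw [finrank_euclideanSpace]; simpa using hk)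
  refine h.congr (Filter.Eventually.of_forall fun y => ?_)
  have hpos : (0:ℝ) < 1 + ‖y‖ := by positivity
  have : ((1 + ‖y‖ : ℝ) ^ (-(k:ℝ))) = ((1 + ‖y‖) ^ k)⁻¹ := by
    rw [Real.rpow_neg hpos.le, Real.rpow_natCast]
  simpa using this

lemma rearrange_bound {A D C : ℝ} (hA : 0 < A) (h : A * D ≤ C) : D ≤ C * A⁻¹ := by
  rw [← div_eq_mul_inv, le_div_iff₀ hA]
  nlinarith

lemma ker_deriv_integrable (f g : 𝓢(Eu n, ℂ)) (x : Eu n) (j : ℕ) :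
    Integrable (fun y => ‖iteratedFDeriv ℝ j (ker f g x) y‖) := by
  obtain ⟨C, hC0, hC⟩ := ker_bound f g j 0
  refine Integrable.mono' ((aux_integrable_pow (Nat.lt_succ_self n)).const_mul C)
    (((ker_contDiff f g x).continuous_iteratedFDeriv (by exact_mod_cast le_top)).norm.aestronglyMeasurable)
    (Filter.Eventually.of_forall fun y => ?_)
  have h := hC x y
  simp only [pow_zero, one_mul] at h
  have hpos : (0:ℝ) < (1 + ‖y‖) ^ (n + 1) := by positivity
  simpa [norm_norm, mul_comm] using rearrange_bound hpos h

lemma ker_integrable (f g : 𝓢(Eu n, ℂ)) (x : Eu n) : Integrable (ker f g x) := by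
  refine (ker_deriv_integrable f g x 0).congr' ?_ (Filter.Eventually.of_forall fun y => ?_)
  · exact ((ker_contDiff f g x).continuous).aestronglyMeasurable
  · rw [norm_iteratedFDeriv_zero, norm_norm]

lemma ker_integral_bound (f g : 𝓢(Eu n, ℂ)) (j m : ℕ) :
    ∃ C : ℝ, 0 ≤ C ∧ ∀ x : Eu n,
      (1 + ‖x‖) ^ m * ∫ y, ‖iteratedFDeriv ℝ j (ker f g x) y‖ ≤ C := by
  obtain ⟨C, hC0, hC⟩ := ker_bound f g j m
  set κ : ℝ := ∫ y : Eu n, ((1 + ‖y‖ : ℝ) ^ (n + 1))⁻¹ with hκ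
  have hκ0 : 0 ≤ κ := integral_nonneg fun y => by positivity
  refine ⟨C * κ, by positivity, fun x => ?_⟩
  rw [← integral_const_mul]
  rw [show C * κ = ∫ y : Eu n, C * ((1 + ‖y‖ : ℝ) ^ (n + 1))⁻¹ from (integral_const_mul C _).symm]
  refine integral_mono_of_nonneg (Filter.Eventually.of_forall fun y => by positivity)
    ((aux_integrable_pow (Nat.lt_succ_self n)).const_mul C)
    (Filter.Eventually.of_forall fun y => ?_)
  have hpos : (0:ℝ) < (1 + ‖y‖) ^ (n + 1) := by positivity
  have h := hC x y
  rw [← mul_assoc, mul_comm ((1 + ‖x‖)^m) _, mul_assoc] at h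
  simpa [mul_comm] using rearrange_bound hpos h

lemma ft_decay (f g : 𝓢(Eu n, ℂ)) :
    ∃ C : ℝ, 0 ≤ C ∧ ∀ (x w : Eu n),
      (1 + ‖x‖) ^ (n + 1) * ((1 + ‖w‖) ^ (n + 1) * ‖𝓕 (ker f g x) w‖) ≤ C := by
  have hpick : ∀ j : ℕ, ∃ C : ℝ, 0 ≤ C ∧ ∀ x : Eu n,
      (1 + ‖x‖) ^ (n + 1) * ∫ y, ‖iteratedFDeriv ℝ j (ker f g x) y‖ ≤ C :=
    fun j => ker_integral_bound f g j (n + 1)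
  choose Cs hCs0 hCs using hpick
  set S : ℝ := ∑ j ∈ Finset.range (n + 2), Cs j with hS
  have hS0 : 0 ≤ S := Finset.sum_nonneg fun j _ => hCs0 j
  have claim1 : ∀ (x w : Eu n) (m : ℕ), m ≤ n + 1 →
      (1 + ‖x‖) ^ (n + 1) * (‖w‖ ^ m * ‖𝓕 (ker f g x) w‖) ≤ 2 ^ m * S := by
    intro x w m hm
    have hcd : ContDiff ℝ ((n + 1 : ℕ) : ℕ∞) (ker f g x) :=
      (ker_contDiff f g x).of_le (by exact_mod_cast le_top)
    have h'f : ∀ k j : ℕ, (k : ℕ∞) ≤ 0 → (j : ℕ∞) ≤ (n + 1 : ℕ) →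
        Integrable (fun v => ‖v‖ ^ k * ‖iteratedFDeriv ℝ j (ker f g x) v‖) volume := by
      intro k j hk _
      have hk0 : k = 0 := by simpa using hk
      subst hk0
      simpa using ker_deriv_integrable f g x j
    have h := Real.pow_mul_norm_iteratedFDeriv_fourier_le (K := (0:ℕ∞))
      (N := ((n + 1 : ℕ) : ℕ∞)) hcd h'f (k := 0) (n := m) le_rfl (by exact_mod_cast hm) w
    simp only [norm_iteratedFDeriv_zero, pow_zero, one_mul, Nat.cast_zero, mul_zero, zero_add] at h
    have hsum : ∑ p ∈ Finset.range (0 + 1) ×ˢ Finset.range (m + 1),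
        ∫ (v : Eu n), ‖v‖ ^ p.1 * ‖iteratedFDeriv ℝ p.2 (ker f g x) v‖
        = ∑ j ∈ Finset.range (m + 1), ∫ (v : Eu n), ‖iteratedFDeriv ℝ j (ker f g x) v‖ := by
      rw [Finset.sum_product]
      simp
    rw [hsum] at h
    calc (1 + ‖x‖) ^ (n + 1) * (‖w‖ ^ m * ‖𝓕 (ker f g x) w‖)
        ≤ (1 + ‖x‖) ^ (n + 1) *
            (2 ^ m * ∑ j ∈ Finset.range (m + 1), ∫ v, ‖iteratedFDeriv ℝ j (ker f g x) v‖) := by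
          exact mul_le_mul_of_nonneg_left h (by positivity)
      _ = 2 ^ m * ∑ j ∈ Finset.range (m + 1),
            (1 + ‖x‖) ^ (n + 1) * ∫ v, ‖iteratedFDeriv ℝ j (ker f g x) v‖ := by
          rw [mul_left_comm, Finset.mul_sum]
      _ ≤ 2 ^ m * ∑ j ∈ Finset.range (m + 1), Cs j := by
          refine mul_le_mul_of_nonneg_left (Finset.sum_le_sum fun j _ => hCs j x) (by positivity)
      _ ≤ 2 ^ m * S := by
          gcongr
          refine Finset.sum_le_sum_of_subset_of_nonneg ?_ fun j _ _ => hCs0 j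
          exact Finset.range_subset_range.mpr (by omega)
  refine ⟨2 ^ (n + 1) * (2 ^ (n + 1) * S), by positivity, fun x w => ?_⟩
  have hexp : ((1:ℝ) + ‖w‖) ^ (n + 1)
      = ∑ m ∈ Finset.range (n + 2), ‖w‖ ^ m * ((n + 1).choose m : ℝ) := by
    rw [add_comm (1:ℝ) ‖w‖, add_pow]
    refine Finset.sum_congr rfl fun m _ => by rw [one_pow, mul_one]
  calc (1 + ‖x‖) ^ (n + 1) * ((1 + ‖w‖) ^ (n + 1) * ‖𝓕 (ker f g x) w‖)
      = ∑ m ∈ Finset.range (n + 2), ((n + 1).choose m : ℝ) *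
          ((1 + ‖x‖) ^ (n + 1) * (‖w‖ ^ m * ‖𝓕 (ker f g x) w‖)) := by
        rw [hexp, Finset.sum_mul, Finset.mul_sum]
        refine Finset.sum_congr rfl fun m _ => by ring
    _ ≤ ∑ m ∈ Finset.range (n + 2), ((n + 1).choose m : ℝ) * (2 ^ (n + 1) * S) := by
        refine Finset.sum_le_sum fun m hm => ?_
        have hm' : m ≤ n + 1 := Nat.lt_succ_iff.mp (Finset.mem_range.mp hm)
        refine mul_le_mul_of_nonneg_left ?_ (by positivity)
        refine le_trans (claim1 x w m hm') ?_
        exact mul_le_mul_of_nonneg_right (pow_le_pow_right₀ one_le_two hm') hS0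
    _ = 2 ^ (n + 1) * (2 ^ (n + 1) * S) := by
        rw [← Finset.sum_mul]
        norm_cast
        rw [Nat.sum_range_choose]

lemma parseval_aux (u v : Eu n → ℂ) (hu : Integrable u) (hv : Integrable v)
    (hcv : Continuous v) (hFv : Integrable (𝓕 v)) :
    ∫ p : Eu n, 𝓕 u (-(2 * π)⁻¹ • p) * 𝓕 v (-(2 * π)⁻¹ • p)
      = ((2 * π : ℝ) ^ n : ℝ) • ∫ y, u y * v (-y) := by
  have s1 : ∫ p : Eu n, 𝓕 u (-(2 * π)⁻¹ • p) * 𝓕 v (-(2 * π)⁻¹ • p)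
      = ((2 * π : ℝ) ^ n : ℝ) • ∫ q : Eu n, 𝓕 u q * 𝓕 v q := by
    have h := MeasureTheory.Measure.integral_comp_smul (volume : Measure (Eu n))
      (fun q => 𝓕 u q * 𝓕 v q) (-(2 * π)⁻¹)
    rw [h, finrank_euclideanSpace, Fintype.card_fin]
    congr 1
    rw [abs_inv, _root_.abs_pow, abs_neg, abs_inv, _root_.abs_of_pos Real.two_pi_pos, inv_pow, inv_inv]
  have flip_eq : (innerₗ (Eu n)).flip = innerₗ (Eu n) := by
    apply LinearMap.ext; intro x; apply LinearMap.ext; intro y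
    simpa using real_inner_comm x y
  have s2 : ∫ q : Eu n, 𝓕 u q * 𝓕 v q = ∫ y, u y * 𝓕 (𝓕 v) y := by
    have hL : Continuous fun p : Eu n × Eu n => (innerₗ (Eu n) p.1) p.2 := by
      simp only [innerₗ_apply_apply]
      exact continuous_inner
    have h := VectorFourier.integral_bilin_fourierIntegral_eq_flip
      (ContinuousLinearMap.mul ℂ ℂ) Real.continuous_fourierChar hL hu hFv
    rw [flip_eq] at h
    exact h
  have s3 : ∀ y : Eu n, 𝓕 (𝓕 v) y = v (-y) := by
    intro y
    have hinv := hcv.fourierInv_fourier_eq hv hFv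
    calc 𝓕 (𝓕 v) y = 𝓕⁻ (𝓕 v) (-y) := by
          rw [Real.fourierInv_eq_fourier_neg, neg_neg]
      _ = v (-y) := by rw [hinv]
  rw [s1, s2]
  congr 1
  exact integral_congr_ae (Filter.Eventually.of_forall fun y => by
    show u y * 𝓕 (𝓕 v) y = u y * v (-y)
    rw [s3 y])

lemma final_step (g₁ g₂ : Eu n → ℂ) (h₁ : Integrable g₁) (h₂ : Integrable g₂) :
    ∫ x : Eu n, ∫ y : Eu n, g₁ (x + (-2⁻¹ : ℝ) • y) * g₂ (x + (2⁻¹ : ℝ) • y)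
      = (∫ x, g₁ x) * ∫ x, g₂ x := by
  set c : Eu n → ℂ := convolution g₁ g₂ (ContinuousLinearMap.mul ℝ ℂ) volume with hc
  have inner_eq : ∀ x : Eu n, ∫ y : Eu n, g₁ (x + (-2⁻¹ : ℝ) • y) * g₂ (x + (2⁻¹ : ℝ) • y)
      = ((2:ℝ)^n) • c ((2:ℝ) • x) := by
    intro x
    have e1 : (fun y : Eu n => g₁ (x + (-2⁻¹:ℝ) • y) * g₂ (x + (2⁻¹:ℝ) • y))
        = fun y : Eu n => (fun t => g₁ (x - t) * g₂ (x + t)) ((2⁻¹:ℝ) • y) :=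
      funext fun y => by
        show g₁ (x + (-2⁻¹:ℝ) • y) * g₂ (x + (2⁻¹:ℝ) • y)
          = g₁ (x - (2⁻¹:ℝ) • y) * g₂ (x + (2⁻¹:ℝ) • y)
        rw [sub_eq_add_neg, ← neg_smul]
    rw [e1, MeasureTheory.Measure.integral_comp_smul volume (fun t => g₁ (x - t) * g₂ (x + t)) (2⁻¹:ℝ),
      finrank_euclideanSpace, Fintype.card_fin]
    have e2 : ∫ t : Eu n, g₁ (x - t) * g₂ (x + t) = c ((2:ℝ) • x) := by
      have h := MeasureTheory.integral_sub_left_eq_self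
        (fun t => g₁ t * g₂ ((2:ℝ) • x - t)) volume x
      have e3 : (fun t : Eu n => g₁ (x - t) * g₂ ((2:ℝ) • x - (x - t)))
          = fun t : Eu n => g₁ (x - t) * g₂ (x + t) := by
        funext t
        congr 2
        module
      rw [e3] at h
      rw [h, hc, convolution_def]
      simp
    rw [e2]
    congr 1
    rw [abs_inv, _root_.abs_pow, abs_inv, _root_.abs_two, inv_pow, inv_inv]
  rw [integral_congr_ae (Filter.Eventually.of_forall inner_eq), integral_smul,
    MeasureTheory.Measure.integral_comp_smul volume c (2:ℝ), finrank_euclideanSpace, Fintype.card_fin]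
  have : |(((2:ℝ) ^ n)⁻¹)| = ((2:ℝ)^n)⁻¹ := by
    rw [abs_inv, _root_.abs_pow, _root_.abs_two]
  rw [this, smul_smul, mul_inv_cancel₀ (by positivity : ((2:ℝ)^n) ≠ 0), one_smul, hc,
    integral_convolution (ContinuousLinearMap.mul ℝ ℂ) h₁ h₂]
  simp

lemma integral_transfer (h : Vn n → ℂ) : ∫ x, h x = ∫ x : Eu n, h x :=
  ((EuclideanSpace.volume_preserving_symm_measurableEquiv_toLp (Fin n)).integral_comp
    (MeasurableEquiv.toLp 2 (Fin n → ℝ)).symm.measurableEmbedding h).symm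

lemma measurePreserving_pair :
    MeasurePreserving (Prod.map (MeasurableEquiv.toLp 2 (Fin n → ℝ)).symm
        (MeasurableEquiv.toLp 2 (Fin n → ℝ)).symm)
      (volume : Measure (Eu n × Eu n)) (volume : Measure (PS n)) :=
  (EuclideanSpace.volume_preserving_symm_measurableEquiv_toLp (Fin n)).prod
    (EuclideanSpace.volume_preserving_symm_measurableEquiv_toLp (Fin n))

lemma integral_transfer2 (h : PS n → ℂ) : ∫ α, h α = ∫ z : Eu n × Eu n, h (z.1, z.2) := by
  have := measurePreserving_pair.integral_comp
    (MeasurableEquiv.prodCongr (MeasurableEquiv.toLp 2 (Fin n → ℝ)).symm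
      (MeasurableEquiv.toLp 2 (Fin n → ℝ)).symm).measurableEmbedding h
  exact this.symm

def toEu (f : 𝓢(Vn n, ℂ)) : 𝓢(Eu n, ℂ) :=
  SchwartzMap.compCLMOfContinuousLinearEquiv ℝ
    (PiLp.continuousLinearEquiv 2 ℝ (fun _ : Fin n => ℝ)) f

/-- Scaled Fourier transform of the kernel. -/
def Ff (f g : 𝓢(Eu n, ℂ)) (x p : Eu n) : ℂ := 𝓕 (ker f g x) (-(2 * π)⁻¹ • p)

lemma innerSumEu (p y : Eu n) : ⟪y, p⟫ = ∑ j, p j * y j := by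
  rw [PiLp.inner_apply]
  exact Finset.sum_congr rfl fun j _ => by rw [Real.inner_apply, mul_comm]

lemma phase_eq (p y : Eu n) :
    (((-2 * π * ⟪y, -(2 * π)⁻¹ • p⟫ : ℝ) : ℂ) * I) = I * ((∑ j, p j * y j : ℝ) : ℂ) := by
  rw [real_inner_smul_right]
  have h : -2 * π * (-(2 * π)⁻¹ * ⟪y, p⟫) = ⟪y, p⟫ := by
    have hπ : (2 * π : ℝ) ≠ 0 := ne_of_gt Real.two_pi_pos
    field_simp
  rw [h, innerSumEu, mul_comm]

lemma wig_eq (ψ : 𝓢(Vn n, ℂ)) (α : PS n) :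
    wig (fun t => ψ t) α = ((((2 * π) ^ n)⁻¹ : ℝ) : ℂ) * Ff (toEu ψ) (toEu ψ) (WithLp.toLp 2 α.1) (WithLp.toLp 2 α.2) := by
  unfold wig wig2 Ff
  congr 1
  rw [Real.fourier_eq', integral_transfer
    (fun y => Complex.exp (Complex.I * ((∑ j, α.2 j * y j : ℝ) : ℂ))
      * ψ (α.1 - (2:ℝ)⁻¹ • y) * (starRingEnd ℂ) (ψ (α.1 + (2:ℝ)⁻¹ • y)))]
  refine integral_congr_ae (Filter.Eventually.of_forall fun y => ?_)
  simp only [ker, phase_eq, smul_eq_mul]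
  exact mul_assoc _ _ _

lemma Ff_decay (f g : 𝓢(Eu n, ℂ)) : ∃ D : ℝ, 0 ≤ D ∧ ∀ x p : Eu n,
    ‖Ff f g x p‖ ≤ D * ((1 + ‖x‖) ^ (n + 1))⁻¹ * ((1 + ‖p‖) ^ (n + 1))⁻¹ := by
  obtain ⟨C, hC0, hC⟩ := ft_decay f g
  refine ⟨(2 * π) ^ (n + 1) * C, by positivity, fun x p => ?_⟩
  set w : Eu n := -(2 * π)⁻¹ • p with hw
  have hwp : (1 + ‖p‖) ^ (n + 1) ≤ (2 * π) ^ (n + 1) * (1 + ‖w‖) ^ (n + 1) := by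
    have hnw : ‖w‖ = (2 * π)⁻¹ * ‖p‖ := by
      rw [hw, norm_smul, Real.norm_eq_abs, abs_neg, abs_inv,
        _root_.abs_of_pos Real.two_pi_pos]
    have h1 : 1 + ‖p‖ ≤ (2 * π) * (1 + ‖w‖) := by
      rw [hnw]
      have hπ : (1:ℝ) ≤ 2 * π := by nlinarith [Real.pi_gt_three]
      have : (2 * π) * ((2 * π)⁻¹ * ‖p‖) = ‖p‖ := by
        field_simp
      nlinarith [norm_nonneg p]
    calc (1 + ‖p‖) ^ (n + 1) ≤ ((2 * π) * (1 + ‖w‖)) ^ (n + 1) := by gcongr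
      _ = (2 * π) ^ (n + 1) * (1 + ‖w‖) ^ (n + 1) := mul_pow _ _ _
  have hkey := hC x w
  have hx1 : (0:ℝ) < (1 + ‖x‖) ^ (n + 1) := by positivity
  have hp1 : (0:ℝ) < (1 + ‖p‖) ^ (n + 1) := by positivity
  have hw1 : (0:ℝ) < (1 + ‖w‖) ^ (n + 1) := by positivity
  have step1 : ‖𝓕 (ker f g x) w‖ ≤ C * ((1 + ‖x‖) ^ (n + 1))⁻¹ * ((1 + ‖w‖) ^ (n + 1))⁻¹ := by
    have h2 : ((1 + ‖x‖) ^ (n + 1) * (1 + ‖w‖) ^ (n + 1)) * ‖𝓕 (ker f g x) w‖ ≤ C := by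
      rw [mul_assoc]; exact hkey
    have := rearrange_bound (by positivity) h2
    rwa [mul_inv, ← mul_assoc] at this
  have hinv : ((1 + ‖w‖) ^ (n + 1))⁻¹ ≤ (2 * π) ^ (n + 1) * ((1 + ‖p‖) ^ (n + 1))⁻¹ := by
    rw [← div_eq_mul_inv, le_div_iff₀ hp1]
    calc ((1 + ‖w‖) ^ (n + 1))⁻¹ * (1 + ‖p‖) ^ (n + 1)
        ≤ ((1 + ‖w‖) ^ (n + 1))⁻¹ * ((2 * π) ^ (n + 1) * (1 + ‖w‖) ^ (n + 1)) :=
          mul_le_mul_of_nonneg_left hwp (by positivity)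
      _ = (2 * π) ^ (n + 1) := by field_simp
  have hFfw : Ff f g x p = 𝓕 (ker f g x) w := rfl
  rw [hFfw]
  refine le_trans step1 ?_
  calc C * ((1 + ‖x‖) ^ (n + 1))⁻¹ * ((1 + ‖w‖) ^ (n + 1))⁻¹
      ≤ C * ((1 + ‖x‖) ^ (n + 1))⁻¹ * ((2 * π) ^ (n + 1) * ((1 + ‖p‖) ^ (n + 1))⁻¹) :=
        mul_le_mul_of_nonneg_left hinv (by positivity)
    _ = (2 * π) ^ (n + 1) * C * ((1 + ‖x‖) ^ (n + 1))⁻¹ * ((1 + ‖p‖) ^ (n + 1))⁻¹ := by ring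

lemma Ff_meas (f g : 𝓢(Eu n, ℂ)) :
    AEStronglyMeasurable (fun z : Eu n × Eu n => Ff f g z.1 z.2) volume := by
  have hrw : (fun z : Eu n × Eu n => Ff f g z.1 z.2)
      = fun z : Eu n × Eu n => ∫ y : Eu n,
          Complex.exp (((-2 * π * ⟪y, -(2 * π)⁻¹ • z.2⟫ : ℝ) : ℂ) * I) • ker f g z.1 y := by
    funext z
    exact Real.fourier_eq' (ker f g z.1) _
  rw [hrw]
  apply AEStronglyMeasurable.integral_prod_right'
    (f := fun q : (Eu n × Eu n) × Eu n =>
      Complex.exp (((-2 * π * ⟪q.2, -(2 * π)⁻¹ • q.1.2⟫ : ℝ) : ℂ) * I) • ker f g q.1.1 q.2)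
  apply Continuous.aestronglyMeasurable
  have hker : Continuous (fun q : (Eu n × Eu n) × Eu n => ker f g q.1.1 q.2) := by
    apply Continuous.mul
    · exact f.continuous.comp ((continuous_fst.fst).sub (by fun_prop))
    · exact Complex.continuous_conj.comp
        (g.continuous.comp ((continuous_fst.fst).add (by fun_prop)))
  refine Continuous.smul (f := fun q : (Eu n × Eu n) × Eu n =>
    Complex.exp (((-2 * π * ⟪q.2, -(2 * π)⁻¹ • q.1.2⟫ : ℝ) : ℂ) * I)) ?_ hker
  refine Complex.continuous_exp.comp (Continuous.mul ?_ continuous_const)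
  refine Complex.continuous_ofReal.comp (Continuous.mul continuous_const ?_)
  exact continuous_inner.comp (continuous_snd.prodMk (by fun_prop))

lemma Ff_prod_integrable (f g f' g' : 𝓢(Eu n, ℂ)) :
    Integrable (fun z : Eu n × Eu n => Ff f g z.1 z.2 * Ff f' g' z.1 z.2) volume := by
  obtain ⟨D1, hD10, hD1⟩ := Ff_decay f g
  obtain ⟨D2, hD20, hD2⟩ := Ff_decay f' g'
  have h2n : n < 2 * (n + 1) := by omega
  have hdom : Integrable (fun z : Eu n × Eu n =>
      (D1 * D2) * (((1 + ‖z.1‖ : ℝ) ^ (2 * (n + 1)))⁻¹ * ((1 + ‖z.2‖ : ℝ) ^ (2 * (n + 1)))⁻¹))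
      volume := by
    exact ((aux_integrable_pow h2n).mul_prod (aux_integrable_pow h2n)).const_mul _
  refine Integrable.mono' hdom ((Ff_meas f g).mul (Ff_meas f' g'))
    (Filter.Eventually.of_forall fun z => ?_)
  rw [norm_mul]
  have hsq : ∀ a : ℝ, 0 ≤ a → ((1 + a) ^ (n + 1))⁻¹ * ((1 + a) ^ (n + 1))⁻¹
      = ((1 + a : ℝ) ^ (2 * (n + 1)))⁻¹ := by
    intro a ha
    rw [← mul_inv, ← pow_add, two_mul]
  calc ‖Ff f g z.1 z.2‖ * ‖Ff f' g' z.1 z.2‖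
      ≤ (D1 * ((1 + ‖z.1‖) ^ (n + 1))⁻¹ * ((1 + ‖z.2‖) ^ (n + 1))⁻¹) *
        (D2 * ((1 + ‖z.1‖) ^ (n + 1))⁻¹ * ((1 + ‖z.2‖) ^ (n + 1))⁻¹) := by
        exact mul_le_mul (hD1 z.1 z.2) (hD2 z.1 z.2) (norm_nonneg _) (by positivity)
    _ = (D1 * D2) * ((((1 + ‖z.1‖) ^ (n + 1))⁻¹ * ((1 + ‖z.1‖) ^ (n + 1))⁻¹) *
          (((1 + ‖z.2‖) ^ (n + 1))⁻¹ * ((1 + ‖z.2‖) ^ (n + 1))⁻¹)) := by ring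
    _ = (D1 * D2) * (((1 + ‖z.1‖ : ℝ) ^ (2 * (n + 1)))⁻¹ *
          ((1 + ‖z.2‖ : ℝ) ^ (2 * (n + 1)))⁻¹) := by
        rw [hsq _ (norm_nonneg _), hsq _ (norm_nonneg _)]

lemma Fker_integrable (f g : 𝓢(Eu n, ℂ)) (x : Eu n) : Integrable (𝓕 (ker f g x)) := by
  obtain ⟨C, hC0, hC⟩ := ft_decay f g
  refine Integrable.mono' ((aux_integrable_pow (Nat.lt_succ_self n)).const_mul
      (C * ((1 + ‖x‖) ^ (n + 1))⁻¹)) ?_ (Filter.Eventually.of_forall fun w => ?_)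
  · have hL : Continuous fun p : Eu n × Eu n => (innerₗ (Eu n) p.1) p.2 := by
      simp only [innerₗ_apply_apply]
      exact continuous_inner
    exact (VectorFourier.fourierIntegral_continuous Real.continuous_fourierChar hL
      (ker_integrable f g x)).aestronglyMeasurable
  · have h2 : ((1 + ‖x‖) ^ (n + 1) * (1 + ‖w‖) ^ (n + 1)) * ‖𝓕 (ker f g x) w‖ ≤ C := by
      rw [mul_assoc]; exact hC x w
    have h3 := rearrange_bound (by positivity) h2
    rw [mul_inv] at h3
    calc ‖𝓕 (ker f g x) w‖ ≤ C * (((1 + ‖x‖) ^ (n + 1))⁻¹ * ((1 + ‖w‖) ^ (n + 1))⁻¹) := h3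
      _ = C * ((1 + ‖x‖) ^ (n + 1))⁻¹ * ((1 + ‖w‖) ^ (n + 1))⁻¹ := by ring

lemma px (ψ φ : 𝓢(Eu n, ℂ)) (x : Eu n) :
    ∫ p : Eu n, Ff ψ ψ x p * Ff φ φ x p
      = ((2 * π : ℝ) ^ n : ℝ) • ∫ y, ker ψ ψ x y * ker φ φ x (-y) :=
  parseval_aux _ _ (ker_integrable ψ ψ x) (ker_integrable φ φ x)
    ((ker_contDiff φ φ x).continuous) (Fker_integrable φ φ x)

lemma kk (ψ φ : 𝓢(Eu n, ℂ)) (x y : Eu n) :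
    ker ψ ψ x y * ker φ φ x (-y)
      = (fun t : Eu n => ψ t * (starRingEnd ℂ) (φ t)) (x + (-2⁻¹ : ℝ) • y) *
        (fun t : Eu n => (starRingEnd ℂ) (ψ t) * φ t) (x + (2⁻¹ : ℝ) • y) := by
  simp only [ker]
  have h1 : x - (2:ℝ)⁻¹ • (-y) = x + (2:ℝ)⁻¹ • y := by module
  have h2 : x + (2:ℝ)⁻¹ • (-y) = x - (2:ℝ)⁻¹ • y := by module
  have h3 : x + (-2⁻¹ : ℝ) • y = x - (2:ℝ)⁻¹ • y := by module
  rw [h1, h2, h3]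
  ring

lemma g1_int (ψ φ : 𝓢(Eu n, ℂ)) : Integrable (fun t : Eu n => ψ t * (starRingEnd ℂ) (φ t)) := by
  refine Integrable.mono' (ψ.integrable.norm.mul_const ((SchwartzMap.seminorm ℝ 0 0) φ))
    ?_ (Filter.Eventually.of_forall fun t => ?_)
  · exact (ψ.continuous.mul (Complex.continuous_conj.comp φ.continuous)).aestronglyMeasurable
  · rw [norm_mul, RCLike.norm_conj]
    exact mul_le_mul_of_nonneg_left (φ.norm_le_seminorm ℝ t) (norm_nonneg _)

lemma g2_int (ψ φ : 𝓢(Eu n, ℂ)) : Integrable (fun t : Eu n => (starRingEnd ℂ) (ψ t) * φ t) := by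
  refine Integrable.mono' (φ.integrable.norm.const_mul ((SchwartzMap.seminorm ℝ 0 0) ψ))
    ?_ (Filter.Eventually.of_forall fun t => ?_)
  · exact ((Complex.continuous_conj.comp ψ.continuous).mul φ.continuous).aestronglyMeasurable
  · rw [norm_mul, RCLike.norm_conj]
    exact mul_le_mul_of_nonneg_right (ψ.norm_le_seminorm ℝ t) (norm_nonneg _)

lemma main_eu (ψ φ : 𝓢(Eu n, ℂ)) :
    ∫ z : Eu n × Eu n, Ff ψ ψ z.1 z.2 * Ff φ φ z.1 z.2
      = ((2 * π : ℝ) ^ n : ℝ) •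
        ((∫ t : Eu n, ψ t * (starRingEnd ℂ) (φ t)) * ∫ t : Eu n, (starRingEnd ℂ) (ψ t) * φ t) := by
  have hInt : Integrable (fun z : Eu n × Eu n => Ff ψ ψ z.1 z.2 * Ff φ φ z.1 z.2)
      ((volume : Measure (Eu n)).prod volume) := Ff_prod_integrable ψ ψ φ φ
  rw [show (volume : Measure (Eu n × Eu n)) = (volume : Measure (Eu n)).prod volume from rfl]
  rw [integral_prod _ hInt]
  rw [integral_congr_ae (Filter.Eventually.of_forall fun x => px ψ φ x)]
  rw [integral_smul]
  congr 1
  calc ∫ x : Eu n, ∫ y : Eu n, ker ψ ψ x y * ker φ φ x (-y)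
      = ∫ x : Eu n, ∫ y : Eu n, (fun t : Eu n => ψ t * (starRingEnd ℂ) (φ t)) (x + (-2⁻¹ : ℝ) • y) *
          (fun t : Eu n => (starRingEnd ℂ) (ψ t) * φ t) (x + (2⁻¹ : ℝ) • y) := by
        refine integral_congr_ae (Filter.Eventually.of_forall fun x => ?_)
        exact integral_congr_ae (Filter.Eventually.of_forall fun y => kk ψ φ x y)
    _ = _ := final_step _ _ (g1_int ψ φ) (g2_int ψ φ)

end MoyalAux
end MoyalAux

open MeasureTheory Real Complex in
/-- |⟨ψ, φ⟩|² = (2π)ⁿ ∫ W_ψ(α) W_φ(α) dα for Schwartz ψ, φ. -/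
theorem inner_sq_eq_wigner_overlap (n : ℕ) (ψ φ : SchwartzMap (Vn n) ℂ) :
    ((‖ip (fun x => ψ x) (fun x => φ x)‖ ^ 2 : ℝ) : ℂ)
      = ((2 * Real.pi) ^ n : ℝ) * ∫ α : PS n, wig (fun x => ψ x) α * wig (fun x => φ x) α := by
  open MoyalAux FourierTransform SchwartzMap RealInnerProductSpace in
  set z := ip (fun x => ψ x) (fun x => φ x) with hz
  have hip : z = ∫ t : Eu n, (starRingEnd ℂ) ((toEu ψ) t) * (toEu φ) t := by
    rw [hz]
    exact integral_transfer (fun x => (starRingEnd ℂ) (ψ x) * φ x)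
  have hconj : (starRingEnd ℂ) z = ∫ t : Eu n, (toEu ψ) t * (starRingEnd ℂ) ((toEu φ) t) := by
    rw [hip, ← integral_conj]
    refine integral_congr_ae (Filter.Eventually.of_forall fun t => ?_)
    simp
  have hLHS : ((‖z‖ ^ 2 : ℝ) : ℂ) = (starRingEnd ℂ) z * z := by
    rw [← Complex.normSq_eq_conj_mul_self]
    norm_cast
    rw [← Complex.sq_norm z]
  -- RHS transformation
  have h1 : ∫ α : PS n, wig (fun x => ψ x) α * wig (fun x => φ x) α
      = ∫ z : Eu n × Eu n, wig (fun x => ψ x) (z.1, z.2) * wig (fun x => φ x) (z.1, z.2) :=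
    integral_transfer2 _
  have h2 : ∀ w : Eu n × Eu n,
      wig (fun x => ψ x) (w.1, w.2) * wig (fun x => φ x) (w.1, w.2)
      = (((((2 * π) ^ n)⁻¹ : ℝ) : ℂ) * ((((2 * π) ^ n)⁻¹ : ℝ) : ℂ)) *
        (Ff (toEu ψ) (toEu ψ) w.1 w.2 * Ff (toEu φ) (toEu φ) w.1 w.2) := by
    intro w
    have e1 : (((w.1, w.2) : PS n)).1 = w.1 := rfl
    have e2 : (((w.1, w.2) : PS n)).2 = w.2 := rfl
    rw [wig_eq ψ (w.1, w.2), wig_eq φ (w.1, w.2), e1, e2]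
    ring
  have hπ0 : ((2 * π : ℝ) ^ n : ℝ) ≠ 0 := by positivity
  have hπ0' : (((2 * π : ℝ) ^ n : ℝ) : ℂ) ≠ 0 := by exact_mod_cast hπ0
  rw [hLHS, h1]
  rw [integral_congr_ae (Filter.Eventually.of_forall h2), integral_const_mul, main_eu]
  rw [hconj, hip, Complex.real_smul, Complex.ofReal_inv]
  field_simp
end
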